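/- arXiv:1509.05363 — 11 statements merged into one kernel-verified Lean document; each statement's English description precedes it below -/
import Mathlib

section
/- Define the completely multiplicative function χ̃₃ : ℕ+ → {-1,1} by χ̃₃(p) = χ₃(p) for primes p ≠ 3 and χ̃₃(3) = 1, where χ₃ is the nontrivial character mod 3 (χ₃(n) = 1 if n ≡ 1 mod 3, = -1 if n ≡ 2 mod 3, = 0 if 3 ∣ n). Then for every positive integer n, ∑_{j=1}^n χ̃₃(j) equals the number of digits equal to 1 in the base-3 expansion of n. -/
/-- Borwein–Choi–Coons: the partial sums of the completely multiplicative
function `χ̃₃` (with `χ̃₃(3) = 1`, agreeing with the nontrivial character mod 3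
at other primes) count the digits equal to 1 in the base-3 expansion of `n`. -/
theorem bcc_partial_sum_eq_digit_count (g : ℕ → ℤ)
    (h1 : g 1 = 1)
    (hmul : ∀ m n : ℕ, 0 < m → 0 < n → g (m * n) = g m * g n)
    (hp : ∀ p : ℕ, p.Prime → p ≠ 3 → g p = if p % 3 = 1 then 1 else -1)
    (h3 : g 3 = 1) :
    ∀ n : ℕ, 0 < n →
      ∑ j ∈ Finset.Icc 1 n, g j = ((Nat.digits 3 n).count 1 : ℤ) := by
  -- Step 1: g agrees with the character mod 3 on numbers coprime to 3
  have gco : ∀ j : ℕ, 0 < j → j % 3 ≠ 0 → g j = if j % 3 = 1 then 1 else -1 := by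
    intro j
    induction j using Nat.strong_induction_on with
    | _ j ih =>
      intro hj hmod
      rcases eq_or_lt_of_le (by omega : 1 ≤ j) with h1' | h2
      · simp [← h1', h1]
      · have hj2 : 2 ≤ j := h2
        set p := j.minFac with hpdef
        have hpp : p.Prime := Nat.minFac_prime (by omega)
        have hpd : p ∣ j := Nat.minFac_dvd j
        obtain ⟨m, hm⟩ := hpd
        have hp2 : 2 ≤ p := hpp.two_le
        have hmpos : 0 < m := by
          rcases Nat.eq_zero_or_pos m with h | h
          · subst h; simp at hm; omega
          · exact h
        have hp3 : p ≠ 3 := by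
          intro h
          apply hmod
          rw [h] at hm
          omega
        have hpm3 : p % 3 ≠ 0 := by
          intro h
          have h3p : (3:ℕ) ∣ p := Nat.dvd_of_mod_eq_zero h
          exact hp3 ((Nat.prime_dvd_prime_iff_eq Nat.prime_three hpp).mp h3p).symm
        have hmm3 : m % 3 ≠ 0 := by
          intro h
          have h3j : (3:ℕ) ∣ j := hm ▸ Dvd.dvd.mul_left (Nat.dvd_of_mod_eq_zero h) p
          omega
        have hmlt : m < j := by
          rw [hm]
          calc m = 1 * m := (one_mul m).symm
          _ < p * m := Nat.mul_lt_mul_of_pos_right (by omega) hmpos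
        have hgm : g m = if m % 3 = 1 then 1 else -1 := ih m hmlt hmpos hmm3
        have hgp : g p = if p % 3 = 1 then 1 else -1 := hp p hpp hp3
        have hgj : g j = g p * g m := by
          rw [hm]; exact hmul p m (by omega) hmpos
        have hjm : j % 3 = (p % 3 * (m % 3)) % 3 := by
          rw [hm, Nat.mul_mod]
        have hpcase : p % 3 = 1 ∨ p % 3 = 2 := by omega
        have hmcase : m % 3 = 1 ∨ m % 3 = 2 := by omega
        rcases hpcase with hpc | hpc <;> rcases hmcase with hmc | hmc <;>
          simp [hgj, hgp, hgm, hpc, hmc] at * <;> simp [hjm, hpc, hmc]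
  -- Step 2: the recursion S(n) = S(n/3) + [n % 3 = 1]
  have key : ∀ n : ℕ, ∑ j ∈ Finset.Icc 1 n, g j
      = (∑ j ∈ Finset.Icc 1 (n / 3), g j) + (if n % 3 = 1 then 1 else 0) := by
    intro n
    induction n using Nat.strong_induction_on with
    | _ n ih =>
      match n with
      | 0 => simp
      | 1 => simp [h1]
      | 2 =>
        have hg2 : g 2 = -1 := by
          have := gco 2 (by norm_num) (by norm_num)
          simpa using this
        have : Finset.Icc 1 2 = {1, 2} := by decide
        simp [this, h1, hg2]
      | (m + 3) =>
        have e1 : ∑ j ∈ Finset.Icc 1 (m + 3), g j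
            = (∑ j ∈ Finset.Icc 1 m, g j) + g (m + 1) + g (m + 2) + g (m + 3) := by
          rw [Finset.sum_Icc_succ_top (by omega), Finset.sum_Icc_succ_top (by omega),
            Finset.sum_Icc_succ_top (by omega)]
        set q := m / 3 with hq
        have hq3 : m % 3 = 0 ∨ m % 3 = 1 ∨ m % 3 = 2 := by omega
        have ihm := ih m (by omega)
        have hgq1 : g (q + 1) = g (q + 1) := rfl
        rcases hq3 with hr | hr | hr
        · -- m = 3q
          have hm3q : m = 3 * q := by omega
          have hdiv : (m + 3) / 3 = q + 1 := by omega
          have hmod' : (m + 3) % 3 = 0 := by omega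
          have g1' : g (m + 1) = 1 := by
            have := gco (m + 1) (by omega) (by omega)
            rw [this]; simp [show (m + 1) % 3 = 1 by omega]
          have g2' : g (m + 2) = -1 := by
            have := gco (m + 2) (by omega) (by omega)
            rw [this]; simp [show (m + 2) % 3 = 2 by omega]
          have g3' : g (m + 3) = g (q + 1) := by
            have : m + 3 = 3 * (q + 1) := by omega
            rw [this, hmul 3 (q + 1) (by omega) (by omega), h3, one_mul]
          rw [e1, g1', g2', g3', ihm, hdiv, hmod',
            Finset.sum_Icc_succ_top (by omega : 1 ≤ q + 1)]
          simp [hr, hq]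
        · -- m = 3q + 1
          have hdiv : (m + 3) / 3 = q + 1 := by omega
          have hmod' : (m + 3) % 3 = 1 := by omega
          have g1' : g (m + 1) = -1 := by
            have := gco (m + 1) (by omega) (by omega)
            rw [this]; simp [show (m + 1) % 3 = 2 by omega]
          have g2' : g (m + 2) = g (q + 1) := by
            have : m + 2 = 3 * (q + 1) := by omega
            rw [this, hmul 3 (q + 1) (by omega) (by omega), h3, one_mul]
          have g3' : g (m + 3) = 1 := by
            have := gco (m + 3) (by omega) (by omega)
            rw [this]; simp [show (m + 3) % 3 = 1 by omega]
          rw [e1, g1', g2', g3', ihm, hdiv, hmod',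
            Finset.sum_Icc_succ_top (by omega : 1 ≤ q + 1)]
          simp [hr, hq]
        · -- m = 3q + 2
          have hdiv : (m + 3) / 3 = q + 1 := by omega
          have hmod' : (m + 3) % 3 = 2 := by omega
          have g1' : g (m + 1) = g (q + 1) := by
            have : m + 1 = 3 * (q + 1) := by omega
            rw [this, hmul 3 (q + 1) (by omega) (by omega), h3, one_mul]
          have g2' : g (m + 2) = 1 := by
            have := gco (m + 2) (by omega) (by omega)
            rw [this]; simp [show (m + 2) % 3 = 1 by omega]
          have g3' : g (m + 3) = -1 := by
            have := gco (m + 3) (by omega) (by omega)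
            rw [this]; simp [show (m + 3) % 3 = 2 by omega]
          rw [e1, g1', g2', g3', ihm, hdiv, hmod',
            Finset.sum_Icc_succ_top (by omega : 1 ≤ q + 1)]
          simp [hr, hq]
  -- Step 3: induction matching the digits recursion
  intro n
  induction n using Nat.strong_induction_on with
  | _ n ih =>
    intro hn
    have hdig : Nat.digits 3 n = n % 3 :: Nat.digits 3 (n / 3) :=
      Nat.digits_def' (by norm_num) hn
    rw [key n, hdig, List.count_cons]
    rcases Nat.eq_zero_or_pos (n / 3) with h0 | hpos
    · rw [h0]
      simp only [Nat.digits_zero, List.count_nil]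
      have he : Finset.Icc 1 0 = (∅ : Finset ℕ) := by simp
      rw [he, Finset.sum_empty]
      by_cases hc : n % 3 = 1 <;> simp [hc]
    · rw [ih (n / 3) (by omega) hpos]
      push_cast
      by_cases hc : n % 3 = 1 <;> simp [hc]
end

section
/- With χ̃₃ as above and n_k = 1 + 3 + 3² + ⋯ + 3^k, one has ∑_{j=1}^{n_k} χ̃₃(j) = k + 1. In particular sup_n |∑_{j=1}^n χ̃₃(j)| = ∞, so the completely multiplicative function χ̃₃ has infinite discrepancy, with partial sums growing at least like log n along this sequence. -/
/-- Along `n_k = 1 + 3 + ⋯ + 3^k` the partial sums of `χ̃₃` equal `k+1`;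
in particular `χ̃₃` has unbounded partial sums, hence infinite discrepancy. -/
theorem bcc_partial_sum_along_nk (g : ℕ → ℤ)
    (h1 : g 1 = 1)
    (hmul : ∀ m n : ℕ, 0 < m → 0 < n → g (m * n) = g m * g n)
    (hp : ∀ p : ℕ, p.Prime → p ≠ 3 → g p = if p % 3 = 1 then 1 else -1)
    (h3 : g 3 = 1) :
    (∀ k : ℕ,
      ∑ j ∈ Finset.Icc 1 (∑ i ∈ Finset.range (k + 1), 3 ^ i), g j = k + 1) ∧
    ∀ C : ℤ, ∃ n : ℕ, 0 < n ∧ C < |∑ j ∈ Finset.Icc 1 n, g j| := by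
  -- value of g on numbers coprime to 3
  have gval : ∀ j : ℕ, j % 3 ≠ 0 → g j = if j % 3 = 1 then 1 else -1 := by
    intro j
    induction j using Nat.strong_induction_on with
    | _ j IH =>
      intro hj3
      have hj0 : j ≠ 0 := by omega
      rcases eq_or_ne j 1 with rfl | hj1
      · simpa using h1
      by_cases hjp : j.Prime
      · exact hp j hjp (by omega)
      -- composite case
      set p := j.minFac with hpdef
      have hpp : p.Prime := Nat.minFac_prime hj1
      have hpd : p ∣ j := Nat.minFac_dvd j
      set m := j / p with hmdef
      have hjm : j = p * m := (Nat.mul_div_cancel' hpd).symm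
      have hp2 : 2 ≤ p := hpp.two_le
      have hm0 : 0 < m := by
        rcases Nat.eq_zero_or_pos m with h | h
        · rw [h, mul_zero] at hjm; omega
        · exact h
      have hm1 : m ≠ 1 := by
        intro h; rw [h, mul_one] at hjm; exact hjp (hjm ▸ hpp)
      have hmlt : m < j := by
        calc m < 2 * m := by omega
        _ ≤ p * m := Nat.mul_le_mul_right m hp2
        _ = j := hjm.symm
      have hmod : j % 3 = p % 3 * (m % 3) % 3 := by rw [hjm, Nat.mul_mod]
      have hm3 : m % 3 ≠ 0 := by intro h; rw [h, mul_zero] at hmod; omega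
      have hp3 : p % 3 ≠ 0 := by intro h; rw [h, zero_mul] at hmod; omega
      have hgj : g j = g p * g m := by rw [hjm]; exact hmul p m (by omega) hm0
      rw [hgj, hp p hpp (by omega), IH m hmlt hm3]
      have hpc : p % 3 = 1 ∨ p % 3 = 2 := by omega
      have hmc : m % 3 = 1 ∨ m % 3 = 2 := by omega
      rcases hpc with h1' | h1' <;> rcases hmc with h2' | h2' <;>
        rw [h1', h2'] at hmod ⊢ <;> norm_num at hmod ⊢ <;> simp [hmod]
  -- key recursion for partial sums
  have key : ∀ n : ℕ, ∑ j ∈ Finset.Icc 1 (3 * n + 1), g j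
      = (∑ j ∈ Finset.Icc 1 n, g j) + 1 := by
    intro n
    induction n with
    | zero => simp [h1]
    | succ n ih =>
      have e1 : 3 * (n + 1) + 1 = (3 * n + 3) + 1 := by ring
      have e2 : 3 * n + 3 = (3 * n + 2) + 1 := by ring
      have e3 : 3 * n + 2 = (3 * n + 1) + 1 := by ring
      rw [e1, Finset.sum_Icc_succ_top (by omega), e2,
        Finset.sum_Icc_succ_top (by omega), e3,
        Finset.sum_Icc_succ_top (by omega), ih,
        Finset.sum_Icc_succ_top (show 1 ≤ n + 1 by omega)]
      have hg2 : g (3 * n + 1 + 1) = -1 := by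
        rw [gval _ (by omega)]
        have : (3 * n + 1 + 1) % 3 = 2 := by omega
        rw [this]; norm_num
      have hg4 : g (3 * n + 2 + 1 + 1) = 1 := by
        rw [gval _ (by omega)]
        have : (3 * n + 2 + 1 + 1) % 3 = 1 := by omega
        simp [this]
      have hg3' : g (3 * n + 2 + 1) = g (n + 1) := by
        have : 3 * n + 2 + 1 = 3 * (n + 1) := by ring
        rw [this, hmul 3 (n + 1) (by omega) (by omega), h3, one_mul]
      rw [hg2, hg4, hg3']
      ring
  have part1 : ∀ k : ℕ,
      ∑ j ∈ Finset.Icc 1 (∑ i ∈ Finset.range (k + 1), 3 ^ i), g j = k + 1 := by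
    intro k
    induction k with
    | zero => simp [h1]
    | succ k ih =>
      have hgeom : (∑ i ∈ Finset.range (k + 2), 3 ^ i)
          = 3 * (∑ i ∈ Finset.range (k + 1), 3 ^ i) + 1 := by
        rw [Finset.sum_range_succ' (fun i => 3 ^ i) (k + 1), Finset.mul_sum]
        simp [pow_succ, mul_comm]
      rw [hgeom, key, ih]
      push_cast
      ring
  refine ⟨part1, fun C => ?_⟩
  refine ⟨∑ i ∈ Finset.range (C.toNat + 1), 3 ^ i, ?_, ?_⟩
  · exact Finset.sum_pos (fun i _ => by positivity) ⟨0, by simp⟩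
  · rw [part1 C.toNat]
    have h1' : (0 : ℤ) ≤ (C.toNat : ℤ) + 1 := by positivity
    rw [abs_of_nonneg h1']
    have := Int.self_le_toNat C
    omega
end

section
/- For the completely multiplicative function χ̃₃, there is an absolute constant K such that for all N > 1, sup_{n ≤ N, d ≥ 1} |∑_{j=1}^n χ̃₃(jd)| ≤ K · log N. (Combined with the lower bound along n_k, the restricted discrepancy sup_{n ≤ N, d} |∑_{j=1}^n χ̃₃(jd)| is comparable to log N.) -/
/-- The discrepancy of `χ̃₃` restricted to `n ≤ N` grows at most logarithmically:
there is an absolute constant `K` with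
`sup_{n ≤ N, d ≥ 1} |∑_{j=1}^n χ̃₃(jd)| ≤ K log N` for all `N > 1`. -/
theorem bcc_discrepancy_log_upper (g : ℕ → ℤ)
    (h1 : g 1 = 1)
    (hmul : ∀ m n : ℕ, 0 < m → 0 < n → g (m * n) = g m * g n)
    (hp : ∀ p : ℕ, p.Prime → p ≠ 3 → g p = if p % 3 = 1 then 1 else -1)
    (h3 : g 3 = 1) :
    ∃ K : ℝ, 0 < K ∧ ∀ N : ℕ, 1 < N → ∀ n d : ℕ, 0 < n → n ≤ N → 0 < d →
      ((|∑ j ∈ Finset.Icc 1 n, g (j * d)| : ℤ) : ℝ) ≤ K * Real.log N := by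
  -- values of g
  have hval : ∀ m : ℕ, 0 < m →
      (g m = 1 ∨ g m = -1) ∧ (m % 3 ≠ 0 → g m = if m % 3 = 1 then 1 else -1) := by
    intro m
    induction m using Nat.strong_induction_on with
    | _ m ih =>
      intro hm
      rcases eq_or_ne m 1 with rfl | hm1
      · simp [h1]
      · obtain ⟨p, hpp, hpd⟩ := Nat.exists_prime_and_dvd hm1
        obtain ⟨k, rfl⟩ := hpd
        have hk : 0 < k := by
          rcases Nat.eq_zero_or_pos k with rfl | hk
          · simp at hm
          · exact hk
        have hkm : k < p * k := by
          have := hpp.two_le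
          nlinarith
        have ihk := ih k hkm hk
        have hgm : g (p * k) = g p * g k := hmul p k hpp.pos hk
        have hgp : g p = 1 ∨ g p = -1 := by
          rcases eq_or_ne p 3 with rfl | hp3
          · exact Or.inl h3
          · rw [hp p hpp hp3]; split <;> simp
        constructor
        · rcases hgp with h | h <;> rcases ihk.1 with h' | h' <;>
            simp [hgm, h, h']
        · intro hmod
          have hp3 : p ≠ 3 := by
            rintro rfl
            exact hmod (by omega)
          have hpmod : p % 3 ≠ 0 := by
            intro h0
            have : (3:ℕ) ∣ p := Nat.dvd_of_mod_eq_zero h0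
            have := (Nat.prime_dvd_prime_iff_eq (by norm_num) hpp).mp this
            exact hp3 this.symm
          have hkmod : k % 3 ≠ 0 := by
            intro h0
            obtain ⟨t, ht⟩ : (3:ℕ) ∣ p * k :=
              Dvd.dvd.mul_left (Nat.dvd_of_mod_eq_zero h0) p
            omega
          have hgpv := hp p hpp hp3
          have hgkv := ihk.2 hkmod
          have hp' : p % 3 = 1 ∨ p % 3 = 2 := by omega
          have hk' : k % 3 = 1 ∨ k % 3 = 2 := by omega
          rw [hgm, hgpv, hgkv, Nat.mul_mod]
          rcases hp' with h | h <;> rcases hk' with h' | h' <;>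
            simp [h, h']
  have hpm : ∀ m : ℕ, 0 < m → g m = 1 ∨ g m = -1 := fun m hm => (hval m hm).1
  have h31 : ∀ m : ℕ, g (3 * m + 1) = 1 := by
    intro m
    have := (hval (3 * m + 1) (by omega)).2 (by omega)
    rw [this]
    simp [Nat.add_mul_mod_self_left, Nat.mul_mod_right]
  have h32 : ∀ m : ℕ, g (3 * m + 2) = -1 := by
    intro m
    have := (hval (3 * m + 2) (by omega)).2 (by omega)
    rw [this]
    have : (3 * m + 2) % 3 = 2 := by omega
    simp [this]
  have h33 : ∀ m : ℕ, 0 < m → g (3 * m) = g m := by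
    intro m hm
    rw [hmul 3 m (by norm_num) hm, h3, one_mul]
  set S : ℕ → ℤ := fun n => ∑ j ∈ Finset.Icc 1 n, g j with hS
  have hstep : ∀ n : ℕ, S (n + 1) = S n + g (n + 1) := by
    intro n
    simp only [hS]
    rw [Finset.sum_Icc_succ_top (by omega)]
  have hS3 : ∀ m : ℕ, S (3 * m) = S m := by
    intro m
    induction m with
    | zero => rfl
    | succ m ihm =>
      have e1 : 3 * (m + 1) = (3 * m + 1) + 1 + 1 := by ring
      rw [e1, hstep, hstep, hstep, ihm]
      have e2 : 3 * m + 1 + 1 + 1 = 3 * (m + 1) := by ring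
      rw [show 3*m+1+1 = 3*m+2 from rfl, e2, h31, h32, h33 (m+1) (by omega),
        hstep m]
      ring
  have hbound : ∀ n : ℕ, 0 ≤ S n ∧ S n ≤ (Nat.log 3 n : ℤ) + 1 := by
    intro n
    induction n using Nat.strong_induction_on with
    | _ n ih =>
      rcases Nat.eq_zero_or_pos n with rfl | hn
      · simp [hS]
      obtain ⟨m, r, hr3, hn'⟩ : ∃ m r, r < 3 ∧ n = 3 * m + r :=
        ⟨n / 3, n % 3, Nat.mod_lt _ (by norm_num), by omega⟩
      have hmn : m < n := by omega
      have ihd := ih m hmn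
      have hlogmono : (Nat.log 3 m : ℤ) ≤ Nat.log 3 n :=
        Int.ofNat_le.mpr (Nat.log_mono_right (by omega))
      have hlogstep : 0 < m → (Nat.log 3 m : ℤ) + 1 ≤ Nat.log 3 n := by
        intro hm0
        have h1' := Nat.log_mul_base (b := 3) (n := m) (by norm_num) (by omega)
        have h2' : Nat.log 3 (m * 3) ≤ Nat.log 3 n :=
          Nat.log_mono_right (by omega)
        omega
      interval_cases r
      · -- r = 0
        have hSn : S n = S m := by rw [show n = 3 * m from by omega, hS3]
        rw [hSn]
        exact ⟨ihd.1, by omega⟩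
      · -- r = 1
        have hSn : S n = S m + 1 := by
          rw [show n = 3 * m + 1 from hn', hstep, hS3, h31]
        rw [hSn]
        rcases Nat.eq_zero_or_pos m with rfl | hm0
        · have hS0 : S 0 = 0 := by simp [hS]
          have hl0 : (0:ℤ) ≤ Nat.log 3 n := Int.ofNat_nonneg _
          constructor <;> omega
        · have := hlogstep hm0
          have := ihd.1; have := ihd.2
          constructor <;> omega
      · -- r = 2
        have hSn : S n = S m := by
          rw [show n = (3 * m + 1) + 1 from by omega, hstep,
            show 3 * m + 1 + 1 = 3 * m + 2 from rfl, h32, hstep, hS3, h31]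
          ring
        rw [hSn]
        exact ⟨ihd.1, by omega⟩
  -- the constant
  refine ⟨(Real.log 3)⁻¹ + (Real.log 2)⁻¹, by positivity, ?_⟩
  intro N hN n d hn hnN hd
  have hsum : ∑ j ∈ Finset.Icc 1 n, g (j * d) = S n * g d := by
    rw [hS, Finset.sum_mul]
    refine Finset.sum_congr rfl fun j hj => ?_
    have hj1 : 0 < j := by
      have := (Finset.mem_Icc.mp hj).1; omega
    exact hmul j d hj1 hd
  have habs : |∑ j ∈ Finset.Icc 1 n, g (j * d)| = S n := by
    rw [hsum, abs_mul]
    rcases hpm d hd with h | h <;> rw [h] <;>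
      simp [abs_of_nonneg (hbound n).1]
  rw [habs]
  have hSn : S n ≤ (Nat.log 3 n : ℤ) + 1 := (hbound n).2
  have h2N : (2:ℝ) ≤ N := by exact_mod_cast hN
  have hlog3pos : (0:ℝ) < Real.log 3 := Real.log_pos (by norm_num)
  have hlog2pos : (0:ℝ) < Real.log 2 := Real.log_pos (by norm_num)
  have hlogN2 : Real.log 2 ≤ Real.log N := Real.log_le_log (by norm_num) h2N
  have hlogNpos : (0:ℝ) < Real.log N := lt_of_lt_of_le hlog2pos hlogN2
  -- Nat.log bound
  have hpow : (3:ℕ) ^ Nat.log 3 n ≤ n := Nat.pow_log_le_self 3 (by omega)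
  have hpowR : (3:ℝ) ^ Nat.log 3 n ≤ (N:ℝ) := by
    have h1' : ((3:ℕ) ^ Nat.log 3 n : ℝ) ≤ (n:ℝ) := by exact_mod_cast hpow
    have h2' : (n:ℝ) ≤ (N:ℝ) := by exact_mod_cast hnN
    push_cast at h1'
    linarith
  have hlogb : (Nat.log 3 n : ℝ) * Real.log 3 ≤ Real.log N := by
    have := Real.log_le_log (by positivity) hpowR
    rwa [Real.log_pow] at this
  have hlogb' : (Nat.log 3 n : ℝ) ≤ Real.log N / Real.log 3 :=
    (le_div_iff₀ hlog3pos).mpr hlogb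
  have hone : (1:ℝ) ≤ Real.log N / Real.log 2 :=
    (le_div_iff₀ hlog2pos).mpr (by linarith)
  have hcast : ((S n : ℤ) : ℝ) ≤ (Nat.log 3 n : ℝ) + 1 := by
    exact_mod_cast hSn
  calc ((S n : ℤ) : ℝ) ≤ (Nat.log 3 n : ℝ) + 1 := hcast
    _ ≤ Real.log N / Real.log 3 + Real.log N / Real.log 2 := by linarith
    _ = ((Real.log 3)⁻¹ + (Real.log 2)⁻¹) * Real.log N := by ring
end

section
/- Let H be a real Hilbert space with orthonormal system (e_a)_{a≥0}, and define f : ℕ+ → H by f(3^a m) = χ₃(m) e_a for m coprime to 3. Then f takes values in the unit sphere, and for every n ≥ 1 and d ≥ 1 one has ‖∑_{j=1}^n f(jd)‖² ≤ #{i ≥ 0 : 3^i ≤ n} ≤ log n / log 3 + 1. -/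
open Finset

private noncomputable def bccChi (m : ℕ) : ℝ := if m % 3 = 1 then 1 else -1

private lemma bccChi_mul {m d : ℕ} (hm : ¬ 3 ∣ m) (hd : ¬ 3 ∣ d) :
    bccChi (m * d) = bccChi m * bccChi d := by
  unfold bccChi
  have h1 : m % 3 = 1 ∨ m % 3 = 2 := by omega
  have h2 : d % 3 = 1 ∨ d % 3 = 2 := by omega
  have hmd : (m * d) % 3 = (m % 3) * (d % 3) % 3 := Nat.mul_mod m d 3
  rcases h1 with h | h <;> rcases h2 with h' | h' <;>
    rw [h, h'] at hmd <;> norm_num at hmd <;> simp [h, h', hmd]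

private lemma bccChi_abs {m : ℕ} : |bccChi m| = 1 := by
  unfold bccChi; split <;> norm_num

private lemma bccChi_sum (N : ℕ) :
    ∑ m ∈ (Icc 1 N).filter (fun m => ¬ 3 ∣ m), bccChi m
      = if N % 3 = 1 then 1 else 0 := by
  induction N with
  | zero => simp
  | succ N ih =>
    have hstep : (Icc 1 (N + 1)).filter (fun m => ¬ 3 ∣ m)
        = if ¬ 3 ∣ (N + 1) then insert (N + 1) ((Icc 1 N).filter (fun m => ¬ 3 ∣ m))
          else (Icc 1 N).filter (fun m => ¬ 3 ∣ m) := by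
      rw [show Icc 1 (N + 1) = insert (N + 1) (Icc 1 N) by
        ext x; simp only [mem_insert, mem_Icc]; omega, filter_insert]
    rw [hstep]
    by_cases h : 3 ∣ (N + 1)
    · rw [if_neg (by tauto), ih]
      have : N % 3 = 2 := by omega
      simp [this, show ¬ (N+1) % 3 = 1 by omega]
    · rw [if_pos h, sum_insert (by simp), ih]
      unfold bccChi
      rcases (show (N + 1) % 3 = 1 ∧ N % 3 = 0 ∨ (N + 1) % 3 = 2 ∧ N % 3 = 1 by omega)
        with ⟨h1, h2⟩ | ⟨h1, h2⟩ <;> simp [h1, h2]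

/-- Vector-valued Borwein–Choi–Coons example: `f(3^a m) = χ₃(m) e_a` takes
values in the unit sphere and has discrepancy at most `√(log n / log 3 + 1)`. -/
theorem bcc_vector_valued {H : Type*} [NormedAddCommGroup H]
    [InnerProductSpace ℝ H] (e : ℕ → H) (he : Orthonormal ℝ e)
    (f : ℕ → H)
    (hf : ∀ a m : ℕ, 0 < m → ¬ (3 ∣ m) →
      f (3 ^ a * m) = (if m % 3 = 1 then (1 : ℝ) else -1) • e a) :
    (∀ n, 0 < n → ‖f n‖ = 1) ∧
    ∀ n d : ℕ, 0 < n → 0 < d →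
      ‖∑ j ∈ Finset.Icc 1 n, f (j * d)‖ ^ 2 ≤
        (((Finset.range (n + 1)).filter (fun i => 3 ^ i ≤ n)).card : ℝ) ∧
      (((Finset.range (n + 1)).filter (fun i => 3 ^ i ≤ n)).card : ℝ) ≤
        Real.log n / Real.log 3 + 1 := by
  have hp3 : Nat.Prime 3 := by norm_num
  have hfχ : ∀ a m : ℕ, 0 < m → ¬ (3 ∣ m) → f (3 ^ a * m) = bccChi m • e a := by
    intro a m hm hmd; rw [hf a m hm hmd]; rfl
  constructor
  · intro n hn
    have hm : 0 < ordCompl[3] n := Nat.ordCompl_pos 3 hn.ne'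
    have hmd : ¬ 3 ∣ ordCompl[3] n := Nat.not_dvd_ordCompl hp3 hn.ne'
    have h1 : f n = bccChi (ordCompl[3] n) • e (n.factorization 3) := by
      have := hfχ (n.factorization 3) (ordCompl[3] n) hm hmd
      rwa [Nat.ordProj_mul_ordCompl_eq_self n 3] at this
    rw [h1, norm_smul, he.1, Real.norm_eq_abs, bccChi_abs, one_mul]
  · intro n d hn hd
    set K := Nat.log 3 n with hK
    have hA : (Finset.range (n + 1)).filter (fun i => 3 ^ i ≤ n) = range (K + 1) := by
      ext i
      simp only [mem_filter, mem_range, Nat.lt_succ_iff]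
      constructor
      · rintro ⟨-, h⟩; exact (Nat.le_log_iff_pow_le (by norm_num) hn.ne').2 h
      · intro h
        have h3 : 3 ^ i ≤ n := (Nat.le_log_iff_pow_le (by norm_num) hn.ne').1 h
        have := Nat.lt_pow_self (n := i) (show 1 < 3 by norm_num)
        exact ⟨by omega, h3⟩
    constructor
    · -- the norm bound
      set b := d.factorization 3 with hb
      set d' := ordCompl[3] d with hd'
      have hd'pos : 0 < d' := Nat.ordCompl_pos 3 hd.ne'
      have hd'nd : ¬ 3 ∣ d' := Nat.not_dvd_ordCompl hp3 hd.ne'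
      have hdeq : d = 3 ^ b * d' := (Nat.ordProj_mul_ordCompl_eq_self d 3).symm
      set A := (Finset.range (n + 1)).filter (fun i => 3 ^ i ≤ n) with hAdef
      set S : ℕ → ℝ := fun a =>
        ∑ m ∈ (Icc 1 (n / 3 ^ a)).filter (fun m => ¬ 3 ∣ m), bccChi m with hS
      have key : ∑ j ∈ Finset.Icc 1 n, f (j * d)
          = ∑ a ∈ A, (S a * bccChi d') • e (a + b) := by
        have hsig : ∑ j ∈ Finset.Icc 1 n, f (j * d)
            = ∑ p ∈ A.sigma (fun a => (Icc 1 (n / 3 ^ a)).filter (fun m => ¬ 3 ∣ m)),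
                (bccChi p.2 * bccChi d') • e (p.1 + b) := by
          refine (Finset.sum_nbij' (fun j => (⟨j.factorization 3, ordCompl[3] j⟩ :
              Σ _ : ℕ, ℕ)) (fun p => 3 ^ p.1 * p.2) ?_ ?_ ?_ ?_ ?_)
          · intro j hj
            simp only [mem_Icc] at hj
            have hj0 : j ≠ 0 := by omega
            simp only [mem_sigma, hAdef, mem_filter, mem_range, mem_Icc]
            have hproj : 3 ^ j.factorization 3 ∣ j := Nat.ordProj_dvd j 3
            have hple : 3 ^ j.factorization 3 ≤ j := Nat.le_of_dvd (by omega) hproj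
            refine ⟨⟨?_, hple.trans hj.2⟩, ⟨Nat.ordCompl_pos 3 hj0, ?_⟩,
              Nat.not_dvd_ordCompl hp3 hj0⟩
            · have := Nat.lt_pow_self (n := j.factorization 3) (show 1 < 3 by norm_num)
              omega
            · rw [Nat.le_div_iff_mul_le (show 0 < 3 ^ j.factorization 3 by positivity), mul_comm]
              exact (Nat.ordProj_mul_ordCompl_eq_self j 3).le.trans hj.2
          · intro p hp
            simp only [mem_sigma, hAdef, mem_filter, mem_range, mem_Icc] at hp
            obtain ⟨⟨_, hpn⟩, ⟨hm1, hm2⟩, hmnd⟩ := hp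
            simp only [mem_Icc]
            constructor
            · exact Nat.one_le_iff_ne_zero.2 (by positivity)
            · calc 3 ^ p.1 * p.2 ≤ 3 ^ p.1 * (n / 3 ^ p.1) :=
                    Nat.mul_le_mul_left _ hm2
                _ ≤ n := Nat.mul_div_le n _
          · intro j hj
            simp only [mem_Icc] at hj
            exact Nat.ordProj_mul_ordCompl_eq_self j 3
          · intro p hp
            simp only [mem_sigma, hAdef, mem_filter, mem_range, mem_Icc] at hp
            obtain ⟨_, ⟨hm1, _⟩, hmnd⟩ := hp
            have h1 : (3 ^ p.1 * p.2).factorization 3 = p.1 := by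
              rw [Nat.factorization_mul (by positivity) (by omega), Nat.Prime.factorization_pow hp3]
              simp [Nat.factorization_eq_zero_of_not_dvd hmnd]
            have h2 : ordCompl[3] (3 ^ p.1 * p.2) = p.2 := by
              rw [h1, Nat.mul_div_cancel_left _ (by positivity)]
            exact Sigma.ext h1 (heq_of_eq h2)
          · intro j hj
            simp only [mem_Icc] at hj
            have hj0 : j ≠ 0 := by omega
            have hmpos : 0 < ordCompl[3] j := Nat.ordCompl_pos 3 hj0
            have hmnd : ¬ 3 ∣ ordCompl[3] j := Nat.not_dvd_ordCompl hp3 hj0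
            have : j * d = 3 ^ (j.factorization 3 + b) * (ordCompl[3] j * d') := by
              rw [pow_add]; nth_rw 1 [← Nat.ordProj_mul_ordCompl_eq_self j 3, hdeq]; ring
            rw [this, hfχ _ _ (by positivity) (by
              intro hdvd
              rcases (Nat.Prime.dvd_mul hp3).1 hdvd with h | h
              exacts [hmnd h, hd'nd h]), bccChi_mul hmnd hd'nd]
        rw [hsig, Finset.sum_sigma]
        refine Finset.sum_congr rfl fun a _ => ?_
        rw [hS]
        simp only [← Finset.sum_smul, Finset.sum_mul]
      rw [key]
      have he' : Orthonormal ℝ (fun a => e (a + b)) :=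
        he.comp _ (fun x y h => by omega)
      have hnorm : ‖∑ a ∈ A, (S a * bccChi d') • e (a + b)‖ ^ 2
          = ∑ a ∈ A, (S a * bccChi d') ^ 2 := by
        rw [← real_inner_self_eq_norm_sq]
        rw [he'.inner_sum (fun a => S a * bccChi d') (fun a => S a * bccChi d') A]
        simp [pow_two]
      rw [hnorm]
      calc ∑ a ∈ A, (S a * bccChi d') ^ 2 ≤ ∑ a ∈ A, 1 := by
            refine Finset.sum_le_sum fun a _ => ?_
            have h1 : |S a| ≤ 1 := by
              simp only [hS]; rw [bccChi_sum]; split <;> norm_num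
            have : |S a * bccChi d'| ≤ 1 := by
              rw [abs_mul, bccChi_abs, mul_one]; exact h1
            calc (S a * bccChi d') ^ 2 = |S a * bccChi d'| ^ 2 := (sq_abs _).symm
              _ ≤ 1 ^ 2 := pow_le_pow_left₀ (abs_nonneg _) this 2
              _ = 1 := one_pow 2
        _ = (A.card : ℝ) := by simp
    · rw [hA]
      simp only [Finset.card_range]
      push_cast
      have h3K : (3 : ℝ) ^ K ≤ n := by exact_mod_cast Nat.pow_log_le_self 3 hn.ne'
      have hlog : (K : ℝ) * Real.log 3 ≤ Real.log n := by
        rw [← Real.log_pow]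
        exact (Real.log_le_log_iff (by positivity) (by exact_mod_cast hn)).2 h3K
      have h3pos : (0 : ℝ) < Real.log 3 := Real.log_pos (by norm_num)
      have : (K : ℝ) ≤ Real.log n / Real.log 3 := (le_div_iff₀ h3pos).2 hlog
      linarith
end

section
/- With f as in the vector-valued Borwein–Choi–Coons example, for n_k = 1 + 3 + ⋯ + 3^k one has ∑_{j=1}^{n_k} f(j) = e_0 + e_1 + ⋯ + e_k, hence ‖∑_{j=1}^{n_k} f(j)‖ = √(k+1). Thus the discrepancy of f diverges like √(log n). -/
private lemma bcc_scalar_sum (N : ℕ) :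
    ∑ j ∈ Finset.Icc 1 (3 * N + 1),
      (if j % 3 = 0 then (0 : ℝ) else if j % 3 = 1 then 1 else -1) = 1 := by
  induction N with
  | zero => simp
  | succ n ih =>
    have h : 3 * (n + 1) + 1 = (3 * n + 1) + 1 + 1 + 1 := by ring
    rw [h, Finset.sum_Icc_succ_top (by omega), Finset.sum_Icc_succ_top (by omega),
      Finset.sum_Icc_succ_top (by omega), ih]
    have h2 : (3 * n + 1 + 1) % 3 = 2 := by omega
    have h3 : (3 * n + 1 + 1 + 1) % 3 = 0 := by omega
    have h4 : (3 * n + 1 + 1 + 1 + 1) % 3 = 1 := by omega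
    rw [h2, h3, h4]
    norm_num

private lemma bcc_step {H : Type*} [NormedAddCommGroup H]
    [InnerProductSpace ℝ H] (e : ℕ → H) (f : ℕ → H)
    (hf : ∀ a m : ℕ, 0 < m → ¬ (3 ∣ m) →
      f (3 ^ a * m) = (if m % 3 = 1 then (1 : ℝ) else -1) • e a) (N : ℕ) :
    ∑ j ∈ Finset.Icc 1 (3 * N + 1), f j = e 0 + ∑ i ∈ Finset.Icc 1 N, f (3 * i) := by
  classical
  rw [← Finset.sum_filter_add_sum_filter_not (Finset.Icc 1 (3 * N + 1)) (fun j => 3 ∣ j)]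
  have himg : (Finset.Icc 1 (3 * N + 1)).filter (fun j => 3 ∣ j)
      = (Finset.Icc 1 N).image (fun i => 3 * i) := by
    ext j
    simp only [Finset.mem_filter, Finset.mem_image, Finset.mem_Icc]
    constructor
    · rintro ⟨⟨h1, h2⟩, c, rfl⟩
      exact ⟨c, ⟨by omega, by omega⟩, rfl⟩
    · rintro ⟨i, ⟨h1, h2⟩, rfl⟩
      exact ⟨⟨by omega, by omega⟩, i, rfl⟩
  have hmul : ∑ j ∈ (Finset.Icc 1 (3 * N + 1)).filter (fun j => 3 ∣ j), f j
      = ∑ i ∈ Finset.Icc 1 N, f (3 * i) := by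
    rw [himg, Finset.sum_image (fun a _ b _ h => by omega)]
  have hnon : ∑ j ∈ (Finset.Icc 1 (3 * N + 1)).filter (fun j => ¬ 3 ∣ j), f j = e 0 := by
    have heach : ∀ j ∈ (Finset.Icc 1 (3 * N + 1)).filter (fun j => ¬ 3 ∣ j),
        f j = (if j % 3 = 1 then (1 : ℝ) else -1) • e 0 := by
      intro j hj
      simp only [Finset.mem_filter, Finset.mem_Icc] at hj
      have := hf 0 j (by omega) hj.2
      simpa using this
    rw [Finset.sum_congr rfl heach, ← Finset.sum_smul]
    have : ∑ j ∈ (Finset.Icc 1 (3 * N + 1)).filter (fun j => ¬ 3 ∣ j),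
        (if j % 3 = 1 then (1 : ℝ) else -1) = 1 := by
      have heq : ∑ j ∈ (Finset.Icc 1 (3 * N + 1)).filter (fun j => ¬ 3 ∣ j),
          (if j % 3 = 1 then (1 : ℝ) else -1)
          = ∑ j ∈ Finset.Icc 1 (3 * N + 1),
            (if j % 3 = 0 then (0 : ℝ) else if j % 3 = 1 then 1 else -1) := by
        rw [Finset.sum_filter]
        refine Finset.sum_congr rfl fun j _ => ?_
        have h3 : 3 ∣ j ↔ j % 3 = 0 := by omega
        by_cases h : j % 3 = 0 <;> simp [h3, h]
      rw [heq, bcc_scalar_sum]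
    rw [this, one_smul]
  rw [hmul, hnon, add_comm]

private lemma bcc_key {H : Type*} [NormedAddCommGroup H]
    [InnerProductSpace ℝ H] : ∀ (k : ℕ) (e : ℕ → H) (f : ℕ → H),
    (∀ a m : ℕ, 0 < m → ¬ (3 ∣ m) →
      f (3 ^ a * m) = (if m % 3 = 1 then (1 : ℝ) else -1) • e a) →
    ∑ j ∈ Finset.Icc 1 (∑ i ∈ Finset.range (k + 1), 3 ^ i), f j =
      ∑ a ∈ Finset.range (k + 1), e a := by
  intro k
  induction k with
  | zero =>
    intro e f hf
    have h1 : f 1 = e 0 := by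
      have := hf 0 1 one_pos (by omega)
      simpa using this
    simp [h1]
  | succ n ih =>
    intro e f hf
    have hN : ∑ i ∈ Finset.range (n + 2), 3 ^ i
        = 3 * (∑ i ∈ Finset.range (n + 1), 3 ^ i) + 1 := by
      rw [Finset.sum_range_succ' (fun i => 3 ^ i)]
      rw [Finset.mul_sum]
      simp [pow_succ, mul_comm]
    rw [hN, bcc_step e f hf]
    have hf' : ∀ a m : ℕ, 0 < m → ¬ (3 ∣ m) →
        (fun i => f (3 * i)) (3 ^ a * m)
          = (if m % 3 = 1 then (1 : ℝ) else -1) • (fun a => e (a + 1)) a := by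
      intro a m hm h3
      have : 3 * (3 ^ a * m) = 3 ^ (a + 1) * m := by ring
      simp only [this]
      exact hf (a + 1) m hm h3
    have := ih (fun a => e (a + 1)) (fun i => f (3 * i)) hf'
    rw [this, Finset.sum_range_succ' (fun a => e a)]
    abel

/-- Vector-valued Borwein–Choi–Coons example, lower bound:
`∑_{j=1}^{n_k} f(j) = e_0 + ⋯ + e_k`, which has norm `√(k+1)`. -/
theorem bcc_vector_valued_lower {H : Type*} [NormedAddCommGroup H]
    [InnerProductSpace ℝ H] (e : ℕ → H) (he : Orthonormal ℝ e)
    (f : ℕ → H)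
    (hf : ∀ a m : ℕ, 0 < m → ¬ (3 ∣ m) →
      f (3 ^ a * m) = (if m % 3 = 1 then (1 : ℝ) else -1) • e a) :
    ∀ k : ℕ,
      (∑ j ∈ Finset.Icc 1 (∑ i ∈ Finset.range (k + 1), 3 ^ i), f j =
        ∑ a ∈ Finset.range (k + 1), e a) ∧
      ‖∑ j ∈ Finset.Icc 1 (∑ i ∈ Finset.range (k + 1), 3 ^ i), f j‖ =
        Real.sqrt (k + 1) := by
  intro k
  have hsum := bcc_key k e f hf
  refine ⟨hsum, ?_⟩
  rw [hsum]
  have hinner : (inner ℝ (∑ a ∈ Finset.range (k + 1), e a)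
      (∑ a ∈ Finset.range (k + 1), e a) : ℝ) = (k + 1 : ℝ) := by
    have := he.inner_sum (fun _ => (1 : ℝ)) (fun _ => (1 : ℝ)) (Finset.range (k + 1))
    simpa using this
  rw [@norm_eq_sqrt_re_inner ℝ, RCLike.re_to_real, hinner]
end

section
/- Let g : ℕ+ → S¹ be a random completely multiplicative function with g(n) = χ₃(n) for n coprime to 3 and g(3^j) = ε_j, where (ε_j) are i.i.d. uniform ±1 signs. Then for all n, d: E|∑_{j=1}^n g(jd)|² ≤ #{i ≥ 0 : 3^i ≤ n} ≪ log n. -/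
open MeasureTheory ProbabilityTheory

/-- The character value: 1 if `m % 3 = 1`, `-1` otherwise. -/
noncomputable def chi3 (m : ℕ) : ℝ := if m % 3 = 1 then 1 else -1

lemma chi3_sq (m : ℕ) : chi3 m ^ 2 = 1 := by
  unfold chi3; split_ifs <;> norm_num

lemma chi3_mul {a b : ℕ} (ha : ¬ 3 ∣ a) (hb : ¬ 3 ∣ b) :
    chi3 (a * b) = chi3 a * chi3 b := by
  have ha' : a % 3 = 1 ∨ a % 3 = 2 := by omega
  have hb' : b % 3 = 1 ∨ b % 3 = 2 := by omega
  have hab : (a * b) % 3 = (a % 3) * (b % 3) % 3 := Nat.mul_mod a b 3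
  unfold chi3
  rcases ha' with h1 | h1 <;> rcases hb' with h2 | h2 <;>
    rw [h1, h2] at hab <;> norm_num at hab <;> simp [h1, h2, hab]

lemma chi3_sum_full (N : ℕ) :
    ∑ j ∈ Finset.Icc 1 N,
      (if j % 3 = 1 then (1:ℝ) else if j % 3 = 2 then -1 else 0)
      = if N % 3 = 1 then 1 else 0 := by
  induction N with
  | zero => simp
  | succ N ih =>
    rw [Finset.sum_Icc_succ_top (Nat.succ_le_succ (Nat.zero_le N)), ih]
    have h : N % 3 = 0 ∨ N % 3 = 1 ∨ N % 3 = 2 := by omega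
    rcases h with h | h | h <;>
      · have h1 : (N + 1) % 3 = (N % 3 + 1) % 3 := by omega
        rw [h] at h1; norm_num at h1; simp [h, h1]

lemma chi3_sum_filter (N : ℕ) :
    ∑ j ∈ (Finset.Icc 1 N).filter (fun j => ¬ 3 ∣ j), chi3 j
      = if N % 3 = 1 then 1 else 0 := by
  rw [Finset.sum_filter, ← chi3_sum_full N]
  refine Finset.sum_congr rfl fun j _ => ?_
  by_cases h : (3:ℕ) ∣ j
  · have h0 : j % 3 = 0 := by omega
    simp [h, h0, chi3]
  · have h0 : j % 3 ≠ 0 := fun hc => h (Nat.dvd_of_mod_eq_zero hc)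
    have h1 : j % 3 = 1 ∨ j % 3 = 2 := by omega
    rcases h1 with h1 | h1 <;> simp [h, h1, chi3]


/-- Random Borwein–Choi–Coons example: with `g(3^a m) = χ₃(m) ε_a` for
`gcd(m,3)=1`, where the `ε_j` (`j ≥ 1`) are i.i.d. uniform ±1 signs,
one has `E|∑_{j=1}^n g(jd)|² ≤ #{i : 3^i ≤ n} ≪ log n`. -/
theorem bcc_random {Ω : Type*} [MeasureSpace Ω]
    [IsProbabilityMeasure (ℙ : Measure Ω)]
    (ε : ℕ → Ω → ℝ) (hmeas : ∀ j, Measurable (ε j))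
    (hε0 : ∀ ω, ε 0 ω = 1)
    (hεval : ∀ j, 1 ≤ j → ∀ ω, ε j ω = 1 ∨ ε j ω = -1)
    (hεdist : ∀ j, 1 ≤ j → ℙ {ω | ε j ω = 1} = (2 : ENNReal)⁻¹)
    (hindep : iIndepFun ε ℙ)
    (g : Ω → ℕ → ℝ)
    (hg : ∀ ω, ∀ a m : ℕ, 0 < m → ¬ (3 ∣ m) →
      g ω (3 ^ a * m) = (if m % 3 = 1 then (1 : ℝ) else -1) * ε a ω) :
    ∀ n d : ℕ, 0 < n → 0 < d →
      (∫ ω, (∑ j ∈ Finset.Icc 1 n, g ω (j * d)) ^ 2) ≤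
        (((Finset.range (n + 1)).filter (fun i => 3 ^ i ≤ n)).card : ℝ) ∧
      (((Finset.range (n + 1)).filter (fun i => 3 ^ i ≤ n)).card : ℝ) ≤
        Real.log n / Real.log 3 + 1 := by
  have hεall : ∀ j ω, ε j ω = 1 ∨ ε j ω = -1 := by
    intro j ω
    rcases Nat.eq_zero_or_pos j with h | h
    · left; rw [h, hε0]
    · exact hεval j h ω
  have hεbd : ∀ j ω, ‖ε j ω‖ ≤ 1 := fun j ω => by
    rcases hεall j ω with h | h <;> rw [h] <;> norm_num
  have hεint : ∀ j, Integrable (ε j) ℙ :=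
    fun j => (integrable_const (1:ℝ)).mono' (hmeas j).aestronglyMeasurable
      (Filter.Eventually.of_forall fun ω => by simpa using hεbd j ω)
  have hεmulint : ∀ s t, Integrable (fun ω => ε s ω * ε t ω) ℙ := fun s t =>
    (integrable_const (1:ℝ)).mono' ((hmeas s).mul (hmeas t)).aestronglyMeasurable
      (Filter.Eventually.of_forall fun ω => by
        have := hεbd s ω; have := hεbd t ω
        rw [norm_mul] at *
        · nlinarith [norm_nonneg (ε s ω), norm_nonneg (ε t ω)]
        )
  have hεmean : ∀ t, 1 ≤ t → (∫ ω, ε t ω) = 0 := by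
    intro t ht
    have hAm : MeasurableSet {ω | ε t ω = 1} := (hmeas t) (measurableSet_singleton 1)
    have hrepr : (fun ω => ε t ω) =
        fun ω => 2 * Set.indicator {ω | ε t ω = 1} (fun _ => (1:ℝ)) ω - 1 := by
      funext ω
      by_cases h : ω ∈ {ω | ε t ω = 1}
      · rw [Set.indicator_of_mem h]
        have h1 : ε t ω = 1 := h
        rw [h1]; ring
      · rw [Set.indicator_of_notMem h]
        have h1 : ε t ω = -1 := (hεval t ht ω).resolve_left h
        rw [h1]; ring
    rw [hrepr, integral_sub (((integrable_indicator_iff hAm).mpr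
        ((integrableOn_const_iff).mpr (Or.inr (measure_lt_top _ _)))).const_mul 2)
        (integrable_const 1)]
    rw [integral_const_mul, integral_indicator_const _ hAm, integral_const]
    rw [measureReal_def, hεdist t ht]
    simp
  have hIdiag : ∀ t, (∫ ω, ε t ω * ε t ω) = 1 := by
    intro t
    have h1 : (fun ω => ε t ω * ε t ω) = fun _ => (1:ℝ) := funext fun ω => by
      rcases hεall t ω with h | h <;> rw [h] <;> norm_num
    rw [h1, integral_const]; simp
  have hI : ∀ s t, s ≠ t → (∫ ω, ε s ω * ε t ω) = 0 := by
    intro s t hst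
    rcases Nat.eq_zero_or_pos s with hs | hs
    · subst hs
      simp only [hε0, one_mul]
      exact hεmean t (by omega)
    rcases Nat.eq_zero_or_pos t with ht | ht
    · subst ht
      simp only [hε0, mul_one]
      exact hεmean s hs
    · have hind : IndepFun (ε s) (ε t) ℙ := hindep.indepFun hst
      have := hind.integral_mul_eq_mul_integral (hεint s).aestronglyMeasurable (hεint t).aestronglyMeasurable
      have h2 : (∫ ω, ε s ω * ε t ω) = (∫ ω, ε s ω) * ∫ ω, ε t ω := this
      rw [h2, hεmean s hs, hεmean t ht, mul_zero]
  intro n d hn hd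
  set B := (Finset.range (n+1)).filter (fun i => 3 ^ i ≤ n) with hB
  have hcard : (B.card : ℝ) ≤ Real.log n / Real.log 3 + 1 := by
    have h1 : B ⊆ Finset.range (Nat.log 3 n + 1) := by
      intro i hi
      rw [hB, Finset.mem_filter] at hi
      rw [Finset.mem_range]
      exact Nat.lt_succ_of_le ((Nat.le_log_iff_pow_le (by norm_num) hn.ne').mpr hi.2)
    have h2 : B.card ≤ Nat.log 3 n + 1 :=
      le_trans (Finset.card_le_card h1) (by rw [Finset.card_range])
    have hlog3 : (0:ℝ) < Real.log 3 := Real.log_pos (by norm_num)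
    have h3 : (Nat.log 3 n : ℝ) ≤ Real.log n / Real.log 3 := by
      rw [le_div_iff₀ hlog3]
      have h4 : ((3:ℝ)) ^ (Nat.log 3 n) ≤ (n:ℝ) := by
        exact_mod_cast Nat.pow_log_le_self 3 hn.ne'
      calc (Nat.log 3 n : ℝ) * Real.log 3 = Real.log ((3:ℝ) ^ (Nat.log 3 n)) := by
            rw [Real.log_pow]
        _ ≤ Real.log n := Real.log_le_log (by positivity) h4
    have h5 : (B.card : ℝ) ≤ (Nat.log 3 n : ℝ) + 1 := by exact_mod_cast h2
    linarith
  refine ⟨?_, hcard⟩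
  -- main variance bound
  set e := d.factorization 3 with he
  set d' := ordCompl[3] d with hd'def
  have hdne : d ≠ 0 := hd.ne'
  have hd3 : ¬ (3:ℕ) ∣ d' := Nat.not_dvd_ordCompl Nat.prime_three hdne
  have hd'pos : 0 < d' := Nat.ordCompl_pos 3 hdne
  set C : ℕ → ℝ := fun b =>
    ∑ j ∈ (Finset.Icc 1 n).filter (fun j => j.factorization 3 = b),
      chi3 (ordCompl[3] j * d') with hC
  -- decomposition of g
  have hgj : ∀ ω : Ω, ∀ j ∈ Finset.Icc 1 n,
      g ω (j * d) = chi3 (ordCompl[3] j * d') * ε (j.factorization 3 + e) ω := by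
    intro ω j hj
    have hj1 : 1 ≤ j := (Finset.mem_Icc.mp hj).1
    have hjne : j ≠ 0 := by omega
    have hm3 : ¬ (3:ℕ) ∣ (ordCompl[3] j * d') := by
      intro h
      rcases (Nat.Prime.dvd_mul Nat.prime_three).mp h with h | h
      · exact Nat.not_dvd_ordCompl Nat.prime_three hjne h
      · exact hd3 h
    have hmpos : 0 < ordCompl[3] j * d' :=
      Nat.mul_pos (Nat.ordCompl_pos 3 hjne) hd'pos
    have key : j * d = 3 ^ (j.factorization 3 + e) * (ordCompl[3] j * d') := by
      have h1 := Nat.ordProj_mul_ordCompl_eq_self j 3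
      have h2 := Nat.ordProj_mul_ordCompl_eq_self d 3
      rw [pow_add]
      calc j * d = (3 ^ j.factorization 3 * ordCompl[3] j) * (3 ^ e * d') := by
            rw [hd'def, he, h1, h2]
        _ = 3 ^ j.factorization 3 * 3 ^ e * (ordCompl[3] j * d') := by ring
    rw [key, hg ω _ _ hmpos hm3]
    rfl
  have hmaps : ∀ j ∈ Finset.Icc 1 n, j.factorization 3 ∈ B := by
    intro j hj
    obtain ⟨hj1, hj2⟩ := Finset.mem_Icc.mp hj
    have hdvd : 3 ^ (j.factorization 3) ∣ j := Nat.ordProj_dvd j 3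
    have hle : 3 ^ (j.factorization 3) ≤ n :=
      le_trans (Nat.le_of_dvd (by omega) hdvd) hj2
    have hlt : j.factorization 3 < 3 ^ (j.factorization 3) :=
      Nat.lt_pow_self (by norm_num)
    rw [hB, Finset.mem_filter, Finset.mem_range]
    exact ⟨by omega, hle⟩
  have hSrw : ∀ ω : Ω, ∑ j ∈ Finset.Icc 1 n, g ω (j * d)
      = ∑ b ∈ B, C b * ε (b + e) ω := by
    intro ω
    rw [Finset.sum_congr rfl (hgj ω),
      ← Finset.sum_fiberwise_of_maps_to hmaps
        (fun j => chi3 (ordCompl[3] j * d') * ε (j.factorization 3 + e) ω)]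
    refine Finset.sum_congr rfl fun b _ => ?_
    rw [hC, Finset.sum_mul]
    refine Finset.sum_congr rfl fun j hj => ?_
    rw [(Finset.mem_filter.mp hj).2]
  -- the integral identity
  have hint : (∫ ω, (∑ j ∈ Finset.Icc 1 n, g ω (j * d)) ^ 2)
      = ∑ b ∈ B, C b ^ 2 := by
    have h1 : ∀ ω : Ω, (∑ j ∈ Finset.Icc 1 n, g ω (j * d)) ^ 2
        = ∑ b ∈ B, ∑ b' ∈ B, (C b * C b') * (ε (b + e) ω * ε (b' + e) ω) := by
      intro ω
      rw [hSrw ω, sq, Finset.sum_mul_sum]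
      exact Finset.sum_congr rfl fun b _ =>
        Finset.sum_congr rfl fun b' _ => by ring
    simp_rw [h1]
    rw [integral_finset_sum _ (fun b _ => integrable_finset_sum _
      (fun b' _ => (hεmulint (b + e) (b' + e)).const_mul (C b * C b')))]
    refine Finset.sum_congr rfl fun b hb => ?_
    rw [integral_finset_sum _ (fun b' _ => (hεmulint (b + e) (b' + e)).const_mul (C b * C b'))]
    rw [Finset.sum_eq_single b]
    · rw [integral_const_mul, hIdiag]; ring
    · intro b' _ hne
      rw [integral_const_mul, hI (b + e) (b' + e) (by omega)]
      ring
    · intro hnb; exact absurd hb hnb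
  rw [hint]
  -- bound each C b ^ 2 by 1
  have hCbound : ∀ b : ℕ, C b ^ 2 ≤ 1 := by
    intro b
    have h1 : C b = (∑ j ∈ (Finset.Icc 1 n).filter (fun j => j.factorization 3 = b),
        chi3 (ordCompl[3] j)) * chi3 d' := by
      rw [hC, Finset.sum_mul]
      refine Finset.sum_congr rfl fun j hj => ?_
      have hjne : j ≠ 0 := by
        have := (Finset.mem_Icc.mp (Finset.mem_filter.mp hj).1).1; omega
      exact chi3_mul (Nat.not_dvd_ordCompl Nat.prime_three hjne) hd3
    have h2 : ∑ j ∈ (Finset.Icc 1 n).filter (fun j => j.factorization 3 = b),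
        chi3 (ordCompl[3] j)
        = ∑ m ∈ (Finset.Icc 1 (n / 3 ^ b)).filter (fun m => ¬ 3 ∣ m), chi3 m := by
      refine Finset.sum_nbij' (fun j => j / 3 ^ b) (fun m => 3 ^ b * m) ?_ ?_ ?_ ?_ ?_
      · intro j hj
        rw [Finset.mem_filter, Finset.mem_Icc] at hj
        obtain ⟨⟨hj1, hj2⟩, hjb⟩ := hj
        have hjne : j ≠ 0 := by omega
        have hdvd : 3 ^ b ∣ j := hjb ▸ Nat.ordProj_dvd j 3
        rw [Finset.mem_filter, Finset.mem_Icc]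
        refine ⟨⟨Nat.one_le_div_iff (Nat.pow_pos (n := b) (by norm_num)) |>.mpr
          (Nat.le_of_dvd (by omega) hdvd), Nat.div_le_div_right hj2⟩, ?_⟩
        have := Nat.not_dvd_ordCompl Nat.prime_three hjne
        rwa [hjb] at this
      · intro m hm
        rw [Finset.mem_filter, Finset.mem_Icc] at hm
        obtain ⟨⟨hm1, hm2⟩, hm3⟩ := hm
        have hp : 0 < 3 ^ b := Nat.pow_pos (n := b) (by norm_num)
        rw [Finset.mem_filter, Finset.mem_Icc]
        refine ⟨⟨Nat.mul_pos hp (by omega), ?_⟩, ?_⟩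
        · calc 3 ^ b * m = m * 3 ^ b := mul_comm _ _
            _ ≤ n := (Nat.le_div_iff_mul_le hp).mp hm2
        · rw [Nat.factorization_mul (by positivity) (by omega)]
          rw [Nat.Prime.factorization_pow Nat.prime_three]
          simp [Nat.factorization_eq_zero_of_not_dvd hm3]
      · intro j hj
        rw [Finset.mem_filter, Finset.mem_Icc] at hj
        obtain ⟨⟨hj1, hj2⟩, hjb⟩ := hj
        exact Nat.mul_div_cancel' (hjb ▸ Nat.ordProj_dvd j 3)
      · intro m hm
        exact Nat.mul_div_cancel_left m (Nat.pow_pos (n := b) (by norm_num))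
      · intro j hj
        rw [Finset.mem_filter] at hj
        rw [← hj.2]
    rw [h1, h2, chi3_sum_filter]
    have h3 := chi3_sq d'
    split_ifs <;> nlinarith
  calc ∑ b ∈ B, C b ^ 2 ≤ ∑ b ∈ B, (1:ℝ) :=
        Finset.sum_le_sum fun b _ => hCbound b
    _ = (B.card : ℝ) := by rw [Finset.sum_const, nsmul_eq_mul, mul_one]
end

section
/- Define f : ℕ+ → {-1,+1} recursively by f(1) = 1 and f(jD! + k) = (-1)^j f(k) for each D ≥ 1, k = 1,…,D!, j = 1,…,D. Then for every fixed d ≥ 1, sup_n |∑_{j=1}^n f(jd)| < ∞. -/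
open Finset

private lemma exists_fact_le (n : ℕ) (hn : 1 ≤ n) :
    ∃ E, Nat.factorial E ≤ n ∧ n < Nat.factorial (E + 1) := by
  have hex : ∃ E, n < Nat.factorial (E + 1) :=
    ⟨n, lt_of_lt_of_le (Nat.lt_succ_self n) (Nat.self_le_factorial (n + 1))⟩
  classical
  refine ⟨Nat.find hex, ?_, Nat.find_spec hex⟩
  rcases Nat.eq_zero_or_pos (Nat.find hex) with h0 | hpos
  · rw [h0]; simpa [Nat.factorial] using hn
  · have h := Nat.find_min hex (Nat.sub_lt hpos one_pos)
    have h1 : Nat.find hex - 1 + 1 = Nat.find hex := Nat.succ_pred_eq_of_pos hpos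
    rw [h1] at h
    exact le_of_not_gt h

private lemma sign_lemma (f : ℕ → ℤ)
    (hrec : ∀ D : ℕ, 1 ≤ D → ∀ j ∈ Finset.Icc 1 D,
      ∀ k ∈ Finset.Icc 1 (Nat.factorial D),
        f (j * Nat.factorial D + k) = (-1) ^ j * f k)
    (D : ℕ) :
    ∀ m : ℕ, ∃ ε : ℤ, (ε = 1 ∨ ε = -1) ∧
      ∀ k, 1 ≤ k → k ≤ Nat.factorial (D + 1) →
        f (m * Nat.factorial (D + 1) + k) = ε * f k := by
  intro m
  induction m using Nat.strong_induction_on with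
  | _ m ih =>
    rcases Nat.eq_zero_or_pos m with rfl | hm
    · exact ⟨1, Or.inl rfl, fun k _ _ => by simp⟩
    set M := Nat.factorial (D + 1) with hM
    have hMpos : 0 < M := Nat.factorial_pos _
    have hmM : 1 ≤ m * M := Nat.one_le_iff_ne_zero.mpr (by positivity)
    obtain ⟨E, hE1, hE2⟩ := exists_fact_le (m * M) hmM
    have hDE : D + 1 ≤ E := by
      by_contra h
      push_neg at h
      have h2 : Nat.factorial (E + 1) ≤ M := Nat.factorial_le h
      have h3 : Nat.factorial (E + 1) ≤ m * M :=
        le_trans h2 (Nat.le_mul_of_pos_left M hm)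
      omega
    have hE0 : 1 ≤ E := by omega
    have hMdvd : M ∣ Nat.factorial E := Nat.factorial_dvd_factorial hDE
    have hMle : M ≤ Nat.factorial E := Nat.le_of_dvd (Nat.factorial_pos _) hMdvd
    set j := m * M / Nat.factorial E with hj
    set r := m * M % Nat.factorial E with hr
    have hdm : Nat.factorial E * j + r = m * M := Nat.div_add_mod (m * M) _
    have hj1 : 1 ≤ j := (Nat.one_le_div_iff (Nat.factorial_pos E)).mpr hE1
    have hjE : j ≤ E := by
      have h6 : m * M < Nat.factorial E * (E + 1) := by
        calc m * M < Nat.factorial (E + 1) := hE2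
          _ = Nat.factorial E * (E + 1) := by rw [Nat.factorial_succ]; ring
      have : j < E + 1 := Nat.div_lt_of_lt_mul h6
      omega
    have hrM : M ∣ r := (Nat.dvd_mod_iff hMdvd).mpr (dvd_mul_left M m)
    have hrlt : r < Nat.factorial E := Nat.mod_lt _ (Nat.factorial_pos E)
    have hrle : r + M ≤ Nat.factorial E := by
      obtain ⟨c, hc⟩ := hrM
      obtain ⟨c', hc'⟩ := hMdvd
      have hcc : c < c' := by
        by_contra hcc
        push_neg at hcc
        have : Nat.factorial E ≤ r := by
          rw [hc, hc']; exact Nat.mul_le_mul_left M hcc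
        omega
      calc r + M = M * c + M := by rw [hc]
        _ = M * (c + 1) := by ring
        _ ≤ M * c' := Nat.mul_le_mul_left M (by omega)
        _ = Nat.factorial E := hc'.symm
    set m' := r / M with hm'
    have hm'M : m' * M = r := Nat.div_mul_cancel hrM
    have hm'lt : m' < m := by
      have h4 : m' * M < m * M := by
        rw [hm'M]
        calc r < Nat.factorial E := hrlt
          _ ≤ m * M := hE1
      exact lt_of_mul_lt_mul_right h4 (Nat.zero_le M)
    obtain ⟨ε', hε'1, hε'2⟩ := ih m' hm'lt
    have hsgn : ((-1 : ℤ)) ^ j = 1 ∨ ((-1 : ℤ)) ^ j = -1 := by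
      rcases Nat.even_or_odd j with h | h
      · exact Or.inl h.neg_one_pow
      · exact Or.inr h.neg_one_pow
    refine ⟨(-1) ^ j * ε', ?_, ?_⟩
    · rcases hε'1 with h | h <;> rcases hsgn with h' | h' <;> rw [h, h'] <;> norm_num
    · intro k hk1 hk2
      have hcomm : j * Nat.factorial E = Nat.factorial E * j := mul_comm _ _
      have key : m * M + k = j * Nat.factorial E + (r + k) := by omega
      rw [key, hrec E hE0 j (mem_Icc.mpr ⟨hj1, hjE⟩) (r + k)
        (mem_Icc.mpr ⟨by omega, by omega⟩)]
      have h5 : r + k = m' * M + k := by rw [hm'M]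
      rw [h5, hε'2 k hk1 hk2, mul_assoc]

/-- The sequence defined by `f(1) = 1` and `f(jD! + k) = (-1)^j f(k)` has
bounded partial sums along the multiples of each fixed `d`. -/
theorem factorial_sequence_bounded_on_multiples (f : ℕ → ℤ)
    (h1 : f 1 = 1)
    (hval : ∀ n, 0 < n → f n = 1 ∨ f n = -1)
    (hrec : ∀ D : ℕ, 1 ≤ D → ∀ j ∈ Finset.Icc 1 D,
      ∀ k ∈ Finset.Icc 1 (Nat.factorial D),
        f (j * Nat.factorial D + k) = (-1) ^ j * f k) :
    ∀ d : ℕ, 0 < d → ∃ B : ℤ, ∀ n : ℕ,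
      |∑ j ∈ Finset.Icc 1 n, f (j * d)| ≤ B := by
  intro d hd
  set D := 2 * d + 1 with hDdef
  have hD1 : 1 ≤ D := by omega
  have hdD : d ≤ D := by omega
  have hddvd : d ∣ Nat.factorial D := Nat.dvd_factorial hd hdD
  set t := Nat.factorial D / d with ht
  have htd : t * d = Nat.factorial D := Nat.div_mul_cancel hddvd
  have htpos : 0 < t :=
    Nat.div_pos (Nat.le_of_dvd (Nat.factorial_pos D) hddvd) hd
  set M := Nat.factorial (D + 1) with hM
  have hMt : M = (D + 1) * Nat.factorial D := Nat.factorial_succ D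
  set L := (D + 1) * t with hL
  have hLd : L * d = M := by rw [hL, hMt, mul_assoc, htd]
  have hLpos : 0 < L := by positivity
  set S := ∑ s ∈ range t, f ((s + 1) * d) with hS
  -- block sums at level D
  have hblock : ∀ n ≤ D, ∑ s ∈ range t, f ((n * t + s + 1) * d) = (-1) ^ n * S := by
    intro n hn
    rcases Nat.eq_zero_or_pos n with rfl | hn0
    · simp [hS]
    · rw [hS, Finset.mul_sum]
      refine Finset.sum_congr rfl fun s hs => ?_
      have hs' : s < t := mem_range.mp hs
      have harg : (n * t + s + 1) * d = n * Nat.factorial D + (s + 1) * d := by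
        rw [← htd]; ring
      rw [harg]
      exact hrec D hD1 n (mem_Icc.mpr ⟨hn0, hn⟩) ((s + 1) * d)
        (mem_Icc.mpr ⟨Nat.one_le_iff_ne_zero.mpr (Nat.mul_pos s.succ_pos hd).ne', by
          rw [← htd]; exact Nat.mul_le_mul_right d (by omega)⟩)
  -- total sum over one full period L is zero
  have hT : ∑ s ∈ range L, f ((s + 1) * d) = 0 := by
    have key : ∀ n, n ≤ D + 1 → ∑ s ∈ range (n * t), f ((s + 1) * d)
        = (∑ j ∈ range n, (-1 : ℤ) ^ j) * S := by
      intro n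
      induction n with
      | zero => simp
      | succ n ihn =>
        intro hn
        have h2 : (n + 1) * t = n * t + t := by ring
        rw [h2, Finset.sum_range_add, ihn (by omega), Finset.sum_range_succ, add_mul]
        congr 1
        rw [← hblock n (by omega)]
    have h3 := key (D + 1) le_rfl
    have h4 : ∑ j ∈ range (D + 1), (-1 : ℤ) ^ j = 0 := by
      rw [neg_one_geom_sum, if_pos ⟨d + 1, by omega⟩]
    rw [hL, h3, h4, zero_mul]
  -- each block of length L sums to zero
  have hblockm : ∀ m : ℕ, ∑ s ∈ range L, f ((m * L + s + 1) * d) = 0 := by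
    intro m
    obtain ⟨ε, hε1, hε2⟩ := sign_lemma f hrec D m
    have hcg : ∀ s ∈ range L, f ((m * L + s + 1) * d) = ε * f ((s + 1) * d) := by
      intro s hs
      have hs' : s < L := mem_range.mp hs
      have harg : (m * L + s + 1) * d = m * M + (s + 1) * d := by
        rw [← hLd]; ring
      rw [harg]
      exact hε2 ((s + 1) * d) (Nat.one_le_iff_ne_zero.mpr (Nat.mul_pos s.succ_pos hd).ne') (by
        rw [← hM, ← hLd]; exact Nat.mul_le_mul_right d (by omega))
    rw [Finset.sum_congr rfl hcg, ← Finset.mul_sum, hT, mul_zero]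
  have hmul : ∀ m : ℕ, ∑ s ∈ range (m * L), f ((s + 1) * d) = 0 := by
    intro m
    induction m with
    | zero => simp
    | succ m ihm =>
      have h2 : (m + 1) * L = m * L + L := by ring
      rw [h2, Finset.sum_range_add, ihm, zero_add]
      rw [← hblockm m]
  refine ⟨(L : ℤ), fun n => ?_⟩
  have hIcc : ∑ j ∈ Finset.Icc 1 n, f (j * d) = ∑ s ∈ range n, f ((s + 1) * d) := by
    rw [← Finset.Ico_add_one_right_eq_Icc, Finset.sum_Ico_eq_sum_range]
    refine Finset.sum_congr (by simp) fun s _ => by rw [add_comm 1 s]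
  rw [hIcc]
  set q := n / L with hq
  have hmod : n % L < L := Nat.mod_lt n hLpos
  have hn2 : n = q * L + n % L := by
    rw [hq, mul_comm]; exact (Nat.div_add_mod n L).symm
  rw [hn2, Finset.sum_range_add, hmul q, zero_add]
  calc |∑ s ∈ range (n % L), f ((q * L + s + 1) * d)|
      ≤ ∑ s ∈ range (n % L), |f ((q * L + s + 1) * d)| :=
        Finset.abs_sum_le_sum_abs _ _
    _ ≤ ∑ _s ∈ range (n % L), 1 := by
        refine Finset.sum_le_sum fun s _ => ?_
        rcases hval ((q * L + s + 1) * d) (by positivity) with h | h <;> rw [h] <;> norm_num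
    _ = (n % L : ℤ) := by simp
    _ ≤ (L : ℤ) := by exact_mod_cast hmod.le
end

section
/- Let (Ω, μ) be a probability space and g : Ω → (S¹)^ℕ measurable with g(ω) completely multiplicative for μ-a.e. ω. If sup_n ∫_Ω |∑_{j=1}^n g(ω)(j)|² dμ(ω) ≤ C² < ∞, then setting f(n) := (ω ↦ g(ω)(n)) ∈ L²(Ω, μ), f takes values in the unit sphere of L²(Ω,μ) and has discrepancy at most C. -/
open MeasureTheory

/-- If a measurable family `g(ω)` of completely multiplicative `S¹`-valued
functions has `∫ |∑_{j≤n} g(ω)(j)|² dμ ≤ C²` for all `n`, then the associated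
`L²`-valued sequence `f(n) = (ω ↦ g(ω)(n))` takes values in the unit sphere
of `L²(Ω,μ)` and has discrepancy at most `C`. -/
theorem measure_theoretic_bounded_discrepancy {Ω : Type*} [MeasurableSpace Ω]
    (μ : Measure Ω) [IsProbabilityMeasure μ]
    (g : Ω → ℕ → ℂ) (hmeas : Measurable g)
    (hmul : ∀ᵐ ω ∂μ, (∀ n, 0 < n → ‖g ω n‖ = 1) ∧
      ∀ m n, 0 < m → 0 < n → g ω (m * n) = g ω m * g ω n)
    (C : ℝ) (hC : 0 ≤ C)
    (hbd : ∀ n : ℕ,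
      (∫ ω, ‖∑ j ∈ Finset.Icc 1 n, g ω j‖ ^ 2 ∂μ) ≤ C ^ 2) :
    (∀ n, 0 < n → (∫ ω, ‖g ω n‖ ^ 2 ∂μ) = 1) ∧
    ∀ n d : ℕ, 0 < n → 0 < d →
      (∫ ω, ‖∑ j ∈ Finset.Icc 1 n, g ω (j * d)‖ ^ 2 ∂μ) ≤ C ^ 2 := by
  constructor
  · intro n hn
    have h : (fun ω => ‖g ω n‖ ^ 2) =ᵐ[μ] fun _ => (1 : ℝ) := by
      filter_upwards [hmul] with ω hω
      rw [hω.1 n hn]; norm_num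
    rw [integral_congr_ae h, integral_const]
    simp
  · intro n d hn hd
    have h : (fun ω => ‖∑ j ∈ Finset.Icc 1 n, g ω (j * d)‖ ^ 2) =ᵐ[μ]
        (fun ω => ‖∑ j ∈ Finset.Icc 1 n, g ω j‖ ^ 2) := by
      filter_upwards [hmul] with ω hω
      obtain ⟨h1, h2⟩ := hω
      have key : ∑ j ∈ Finset.Icc 1 n, g ω (j * d)
          = (∑ j ∈ Finset.Icc 1 n, g ω j) * g ω d := by
        rw [Finset.sum_mul]
        refine Finset.sum_congr rfl fun j hj => ?_
        have : 1 ≤ j := (Finset.mem_Icc.mp hj).1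
        exact h2 j d (by omega) hd
      rw [key, norm_mul, h1 d hd, mul_one]
    rw [integral_congr_ae h]
    exact hbd n
end

section
/- Let q ≥ 1, k ≥ 1, let χ be a primitive Dirichlet character mod q, and let d₁ ≠ d₂ be divisors of q^{k-1}. Then for any integers m₁, m₂, ∑_{a=1}^{q^k} 1_{d₁ ∣ a+m₁} 1_{d₂ ∣ a+m₂} χ((a+m₁)/d₁) · conj(χ((a+m₂)/d₂)) = 0. -/
open Finset

/-- Sum over a full period is invariant under shift by one. -/
private lemma sum_shift_one {N : ℕ} {F : ℕ → ℂ} (hF : ∀ a, F (a + N) = F a) :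
    ∑ a ∈ range N, F (a + 1) = ∑ a ∈ range N, F a := by
  have h3 : F N = F 0 := by simpa using hF 0
  have key : (∑ a ∈ range N, F (a + 1)) + F 0 = (∑ a ∈ range N, F a) + F N := by
    rw [← Finset.sum_range_succ' F N, Finset.sum_range_succ]
  rw [h3] at key
  exact add_right_cancel key

/-- Sum over a full period is invariant under shifts. -/
private lemma periodic_sum_shift {N : ℕ} {F : ℕ → ℂ} (hF : ∀ a, F (a + N) = F a) (c : ℕ) :
    ∑ a ∈ range N, F (a + c) = ∑ a ∈ range N, F a := by
  induction c with
  | zero => simp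
  | succ c ih =>
    have hper : ∀ a, F ((a + N) + c) = F (a + c) := by
      intro a
      rw [show a + N + c = (a + c) + N by omega, hF]
    calc ∑ a ∈ range N, F (a + (c + 1))
        = ∑ a ∈ range N, F ((a + 1) + c) := by
          refine Finset.sum_congr rfl fun a _ => ?_
          congr 1; omega
      _ = ∑ a ∈ range N, F (a + c) := sum_shift_one (F := fun a => F (a + c)) hper
      _ = ∑ a ∈ range N, F a := ih

/-- If `G` is invariant under shift by `H` and the `p`-fold average of `F` over shifts
by `H` vanishes, the full-period sum of `F * G` vanishes. -/
private lemma kill_lemma {N p H : ℕ} (hp : 0 < p) {F G : ℕ → ℂ}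
    (hper : ∀ a, F (a + N) * G (a + N) = F a * G a)
    (hG : ∀ a, G (a + H) = G a)
    (hF : ∀ a, ∑ t ∈ range p, F (a + t * H) = 0) :
    ∑ a ∈ range N, F a * G a = 0 := by
  have hGt : ∀ t a, G (a + t * H) = G a := by
    intro t
    induction t with
    | zero => simp
    | succ t ih =>
      intro a
      rw [show a + (t + 1) * H = (a + t * H) + H by ring, hG, ih]
  have key : ∀ t, ∑ a ∈ range N, F (a + t * H) * G a = ∑ a ∈ range N, F a * G a := by
    intro t
    calc ∑ a ∈ range N, F (a + t * H) * G a
        = ∑ a ∈ range N, F (a + t * H) * G (a + t * H) := by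
          refine Finset.sum_congr rfl fun a _ => ?_
          rw [hGt]
      _ = ∑ a ∈ range N, F a * G a := periodic_sum_shift (F := fun a => F a * G a) hper (t * H)
  have h1 : ∑ t ∈ range p, ∑ a ∈ range N, F (a + t * H) * G a
      = (p : ℂ) * ∑ a ∈ range N, F a * G a := by
    rw [Finset.sum_congr rfl fun t _ => key t, Finset.sum_const, Finset.card_range,
      nsmul_eq_mul]
  have h2 : ∑ t ∈ range p, ∑ a ∈ range N, F (a + t * H) * G a = 0 := by
    rw [Finset.sum_comm]
    refine Finset.sum_eq_zero fun a _ => ?_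
    rw [← Finset.sum_mul, hF, zero_mul]
  have h3 : (p : ℂ) * ∑ a ∈ range N, F a * G a = 0 := by rw [← h1, h2]
  have hpC : (p : ℂ) ≠ 0 := Nat.cast_ne_zero.mpr hp.ne'
  exact (mul_eq_zero.mp h3).resolve_left hpC

/-- A primitive character sums to zero over any fiber of the reduction to a proper divisor
of the level. -/
private lemma fiber_sum_zero {q : ℕ} [NeZero q] {χ : DirichletCharacter ℂ q}
    (hχ : χ.IsPrimitive) {d : ℕ} (hd : d ∣ q) (hdq : d ≠ q) (Y : ZMod d) :
    ∑ c : ZMod q, (if ZMod.castHom hd (ZMod d) c = Y then χ c else 0) = 0 := by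
  -- χ does not factor through d
  have hq0 : q ≠ 0 := NeZero.ne q
  have hnot : ¬ χ.FactorsThrough d := by
    intro h
    have h1 : χ.conductor ≤ d :=
      Nat.sInf_le ((DirichletCharacter.mem_conductorSet_iff χ).mpr h)
    have hc : χ.conductor = q := hχ
    have h2 : d < q := lt_of_le_of_ne (Nat.le_of_dvd (Nat.pos_of_ne_zero hq0) hd) hdq
    omega
  rw [DirichletCharacter.factorsThrough_iff_ker_unitsMap hd] at hnot
  simp only [SetLike.le_def, not_forall] at hnot
  obtain ⟨u, hu1, hu2⟩ := hnot
  rw [MonoidHom.mem_ker] at hu1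
  rw [MonoidHom.mem_ker] at hu2
  -- the value χ u is not 1
  have hχu : χ (↑u : ZMod q) ≠ 1 := by
    intro h
    apply hu2
    ext
    rw [MulChar.coe_toUnitHom]
    simpa using h
  -- u reduces to 1 mod d
  have hcastu : ZMod.castHom hd (ZMod d) (↑u : ZMod q) = 1 := by
    have : ((ZMod.unitsMap hd u : (ZMod d)ˣ) : ZMod d) = ((1 : (ZMod d)ˣ) : ZMod d) := by
      rw [hu1]
    simpa [ZMod.unitsMap_def] using this
  -- reindex the sum by multiplication by u
  set S := ∑ c : ZMod q, (if ZMod.castHom hd (ZMod d) c = Y then χ c else 0) with hS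
  have hre : S = ∑ c : ZMod q,
      (if ZMod.castHom hd (ZMod d) ((↑u : ZMod q) * c) = Y then χ ((↑u : ZMod q) * c) else 0) := by
    rw [hS]
    exact (Fintype.sum_bijective (fun c : ZMod q => (↑u : ZMod q) * c)
      (Units.mulLeft_bijective u) _ _ (fun c => rfl)).symm
  have hre2 : S = χ (↑u : ZMod q) * S := by
    calc S = ∑ c : ZMod q,
        (if ZMod.castHom hd (ZMod d) ((↑u : ZMod q) * c) = Y
          then χ ((↑u : ZMod q) * c) else 0) := hre
      _ = ∑ c : ZMod q, χ (↑u : ZMod q) *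
          (if ZMod.castHom hd (ZMod d) c = Y then χ c else 0) := by
          refine Fintype.sum_congr _ _ fun c => ?_
          rw [map_mul, hcastu, one_mul, map_mul, mul_ite, mul_zero]
      _ = χ (↑u : ZMod q) * S := by rw [← Finset.mul_sum, ← hS]
  have : (1 - χ (↑u : ZMod q)) * S = 0 := by
    rw [sub_mul, one_mul, ← hre2, sub_self]
  rcases mul_eq_zero.mp this with h | h
  · exact absurd (by linear_combination -h) hχu
  · exact h

/-- A primitive character sums to zero over an arithmetic progression of length `p`
with common difference a unit multiple of `q/p`. -/
private lemma ap_sum_zero {q : ℕ} [NeZero q] {χ : DirichletCharacter ℂ q}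
    (hχ : χ.IsPrimitive) {p : ℕ} (hp : p.Prime) (hpq : p ∣ q) {w : ℕ} (hw : ¬ p ∣ w)
    (x : ZMod q) :
    ∑ t ∈ range p, χ (x + ((t * (w * (q / p)) : ℕ) : ZMod q)) = 0 := by
  haveI : Fact p.Prime := ⟨hp⟩
  have hq0 : q ≠ 0 := NeZero.ne q
  set d := q / p with hd_def
  have hd : d ∣ q := Nat.div_dvd_of_dvd hpq
  have hpd : p * d = q := Nat.mul_div_cancel' hpq
  have hd0 : d ≠ 0 := by
    intro h; rw [h, mul_zero] at hpd; exact hq0 hpd.symm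
  have hdq : d ≠ q := by
    intro h
    rw [h] at hpd
    nlinarith [hp.two_le, Nat.pos_of_ne_zero hq0]
  haveI : NeZero d := ⟨hd0⟩
  have hw0 : (w : ZMod p) ≠ 0 := by
    rw [Ne, ZMod.natCast_eq_zero_iff]; exact hw
  have hfiber := fiber_sum_zero hχ hd hdq (ZMod.castHom hd (ZMod d) x)
  rw [← Finset.sum_filter] at hfiber
  rw [← hfiber]
  refine Finset.sum_bij (fun t _ => x + ((t * (w * d) : ℕ) : ZMod q)) ?_ ?_ ?_ ?_
  · intro t _
    rw [Finset.mem_filter]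
    refine ⟨Finset.mem_univ _, ?_⟩
    rw [map_add, map_natCast]
    have : ((t * (w * d) : ℕ) : ZMod d) = 0 := by
      rw [ZMod.natCast_eq_zero_iff]
      exact ⟨t * w, by ring⟩
    rw [this, add_zero]
  · intro t₁ ht₁ t₂ ht₂ h
    have h2 : ((t₁ * (w * d) : ℕ) : ZMod q) = ((t₂ * (w * d) : ℕ) : ZMod q) :=
      add_left_cancel h
    rw [ZMod.natCast_eq_natCast_iff, ← hpd, show t₁ * (w * d) = t₁ * w * d by ring,
      show t₂ * (w * d) = t₂ * w * d by ring,
      Nat.ModEq.mul_right_cancel_iff' hd0] at h2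
    have h3 : ((t₁ * w : ℕ) : ZMod p) = ((t₂ * w : ℕ) : ZMod p) :=
      (ZMod.natCast_eq_natCast_iff _ _ _).mpr h2
    push_cast at h3
    have h4 : (t₁ : ZMod p) = (t₂ : ZMod p) := mul_right_cancel₀ hw0 h3
    exact Nat.ModEq.eq_of_lt_of_lt ((ZMod.natCast_eq_natCast_iff _ _ _).mp h4)
      (Finset.mem_range.mp ht₁) (Finset.mem_range.mp ht₂)
  · intro b hb
    rw [Finset.mem_filter] at hb
    have hcast : ZMod.castHom hd (ZMod d) (b - x) = 0 := by
      rw [map_sub, hb.2, sub_self]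
    set z := b - x with hz
    set v := z.val with hv_def
    have hdv : d ∣ v := by
      rw [← ZMod.natCast_eq_zero_iff, hv_def, ZMod.natCast_val, ← ZMod.castHom_apply (h := hd), hcast]
    set s := v / d with hs_def
    have hvsd : s * d = v := by
      rw [hs_def]; exact Nat.div_mul_cancel hdv
    have hs_lt : s < p := by
      have hvq : v < q := ZMod.val_lt z
      have : s * d < p * d := by rw [hvsd, ← hpd] at *; omega
      exact Nat.lt_of_mul_lt_mul_right this
    set T : ZMod p := (s : ZMod p) * (w : ZMod p)⁻¹ with hT
    refine ⟨T.val, Finset.mem_range.mpr (ZMod.val_lt T), ?_⟩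
    have hkey : T.val * w ≡ s [MOD p] := by
      rw [← ZMod.natCast_eq_natCast_iff]
      push_cast
      rw [ZMod.natCast_val, ZMod.cast_id, hT, mul_assoc, inv_mul_cancel₀ hw0, mul_one]
    have hkey2 : T.val * (w * d) ≡ v [MOD q] := by
      rw [← hpd, ← hvsd, show T.val * (w * d) = T.val * w * d by ring]
      exact hkey.mul_right' d
    have hvz : ((v : ℕ) : ZMod q) = z := by
      rw [hv_def, ZMod.natCast_val, ZMod.cast_id]
    show x + ((T.val * (w * d) : ℕ) : ZMod q) = b
    rw [(ZMod.natCast_eq_natCast_iff _ _ _).mpr hkey2, hvz, hz]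
    ring
  · intro t _
    rfl

/-- Shift invariance of the indicator-times-character summand. -/
private lemma inv_shift {q : ℕ} (χ : DirichletCharacter ℂ q) {d m H : ℕ}
    (hdH : d ∣ H) (hqH : q ∣ H / d) (a : ℕ) :
    (if d ∣ a + H + m then χ (((a + H + m) / d : ℕ) : ZMod q) else 0)
      = (if d ∣ a + m then χ (((a + m) / d : ℕ) : ZMod q) else 0) := by
  have h1 : d ∣ a + H + m ↔ d ∣ a + m := by
    rw [show a + H + m = (a + m) + H by omega]
    exact ⟨fun h => by simpa using Nat.dvd_sub h hdH, fun h => h.add hdH⟩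
  by_cases hc : d ∣ a + m
  · rw [if_pos (h1.mpr hc), if_pos hc]
    congr 1
    rw [show a + H + m = (a + m) + H by omega, Nat.add_div_of_dvd_left hdH]
    push_cast
    rw [(ZMod.natCast_eq_zero_iff _ _).mpr hqH, add_zero]
  · rw [if_neg (fun h => hc (h1.mp h)), if_neg hc]

/-- Averaging the summand over `p` shifts yields zero. -/
private lemma avg_shift {q : ℕ} [NeZero q] {χ : DirichletCharacter ℂ q}
    (hχ : χ.IsPrimitive) {p : ℕ} (hp : p.Prime) (hpq : p ∣ q) {w : ℕ} (hw : ¬ p ∣ w)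
    {d m H : ℕ} (hdH : d ∣ H) (hH : H / d = w * (q / p)) (a : ℕ) :
    ∑ t ∈ range p,
      (if d ∣ a + t * H + m then χ (((a + t * H + m) / d : ℕ) : ZMod q) else 0) = 0 := by
  by_cases hc : d ∣ a + m
  · have hterm : ∀ t, (if d ∣ a + t * H + m then χ (((a + t * H + m) / d : ℕ) : ZMod q) else 0)
        = χ ((((a + m) / d : ℕ) : ZMod q) + ((t * (w * (q / p)) : ℕ) : ZMod q)) := by
      intro t
      have hdvd : d ∣ t * H := (hdH.mul_left t)
      have hdd : d ∣ a + t * H + m := by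
        rw [show a + t * H + m = (a + m) + t * H by omega]
        exact hc.add hdvd
      rw [if_pos hdd]
      congr 1
      rw [show a + t * H + m = (a + m) + t * H by omega, Nat.add_div_of_dvd_right hc,
        Nat.mul_div_assoc t hdH, hH]
      push_cast
      ring
    rw [Finset.sum_congr rfl fun t _ => hterm t]
    exact ap_sum_zero hχ hp hpq hw _
  · refine Finset.sum_eq_zero fun t _ => ?_
    rw [if_neg]
    intro h
    apply hc
    have hdvd : d ∣ t * H := hdH.mul_left t
    have := Nat.dvd_sub h hdvd
    simpa [show a + t * H + m - t * H = a + m by omega] using this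

/-- `d ∣ q^k` and `q ∣ q^k / d` for a divisor `d` of `q^(k-1)`. -/
private lemma div_facts {q k d : ℕ} (hk : 1 ≤ k) (hd : d ∣ q ^ (k - 1)) (hd0 : d ≠ 0) :
    d ∣ q ^ k ∧ q ∣ q ^ k / d := by
  obtain ⟨c, hc⟩ := hd
  have hN : q ^ k = d * (c * q) := by
    rw [show k = (k - 1) + 1 by omega, pow_succ, hc]; ring
  refine ⟨hN ▸ Dvd.intro _ rfl, ?_⟩
  rw [hN, Nat.mul_div_cancel_left _ (Nat.pos_of_ne_zero hd0)]
  exact dvd_mul_left q c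

/-- Construction of the shift `H`: the summand for `dI` is invariant under `+H`,
while the summand for `dA` averages to zero over `p` shifts by `H`. -/
private lemma core {q k : ℕ} (hq0 : q ≠ 0) (hk : 1 ≤ k) {χ : DirichletCharacter ℂ q}
    (hχ : χ.IsPrimitive) {dI dA : ℕ} (hdI : dI ∣ q ^ (k - 1)) (hdA : dA ∣ q ^ (k - 1))
    {p : ℕ} (hp : p.Prime) (hlt : dI.factorization p < dA.factorization p) :
    ∃ H, (∀ a m, (if dI ∣ a + H + m then χ (((a + H + m) / dI : ℕ) : ZMod q) else 0)
              = (if dI ∣ a + m then χ (((a + m) / dI : ℕ) : ZMod q) else 0))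
       ∧ (∀ a m, ∑ t ∈ range p,
            (if dA ∣ a + t * H + m then χ (((a + t * H + m) / dA : ℕ) : ZMod q) else 0)
              = 0) := by
  haveI : NeZero q := ⟨hq0⟩
  have hqk0 : q ^ (k - 1) ≠ 0 := pow_ne_zero _ hq0
  have hdI0 : dI ≠ 0 := by rintro rfl; exact hqk0 (zero_dvd_iff.mp hdI)
  have hdA0 : dA ≠ 0 := by rintro rfl; exact hqk0 (zero_dvd_iff.mp hdA)
  -- p divides q
  have hpdA : p ∣ dA := (Nat.Prime.dvd_iff_one_le_factorization hp hdA0).mpr (by omega)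
  have hpq : p ∣ q := hp.dvd_of_dvd_pow (hpdA.trans hdA)
  set L := Nat.lcm dI dA with hL
  have hLI : dI ∣ L := Nat.dvd_lcm_left _ _
  have hLA : dA ∣ L := Nat.dvd_lcm_right _ _
  have hL0 : L ≠ 0 := Nat.lcm_ne_zero hdI0 hdA0
  have hLfact : L.factorization p = max (dI.factorization p) (dA.factorization p) := by
    rw [hL, Nat.factorization_lcm hdI0 hdA0, Finsupp.sup_apply]
  refine ⟨L * (q / p), ?_, ?_⟩
  · -- invariance for dI
    obtain ⟨e, he⟩ := id hLI
    have he0 : e ≠ 0 := by rintro rfl; exact hL0 (by simp [he])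
    have hefact : e.factorization p = L.factorization p - dI.factorization p := by
      have : e = L / dI := by rw [he, Nat.mul_div_cancel_left _ (Nat.pos_of_ne_zero hdI0)]
      rw [this, Nat.factorization_div hLI, Finsupp.tsub_apply]
    have hpe : p ∣ e := by
      refine (Nat.Prime.dvd_iff_one_le_factorization hp he0).mpr ?_
      rw [hefact, hLfact]
      omega
    obtain ⟨e', he'⟩ := hpe
    intro a m
    refine inv_shift χ ?_ ?_ a
    · exact ⟨e * (q / p), by rw [he]; ring⟩
    · rw [he, show dI * e * (q / p) = dI * (e * (q / p)) by ring,
        Nat.mul_div_cancel_left _ (Nat.pos_of_ne_zero hdI0), he',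
        show p * e' * (q / p) = e' * (p * (q / p)) by ring, Nat.mul_div_cancel' hpq]
      exact dvd_mul_left q e'
  · -- averaging for dA
    obtain ⟨w, hwdef⟩ := id hLA
    have hw0 : w ≠ 0 := by rintro rfl; exact hL0 (by simp [hwdef])
    have hwfact : w.factorization p = 0 := by
      have : w = L / dA := by
        rw [hwdef, Nat.mul_div_cancel_left _ (Nat.pos_of_ne_zero hdA0)]
      rw [this, Nat.factorization_div hLA]
      have : L.factorization p = dA.factorization p := by rw [hLfact]; omega
      simp [Finsupp.tsub_apply, this]
    have hpw : ¬ p ∣ w := by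
      intro h
      have := (Nat.Prime.dvd_iff_one_le_factorization hp hw0).mp h
      omega
    intro a m
    refine avg_shift hχ hp hpq hpw ?_ ?_ a
    · exact ⟨w * (q / p), by rw [hwdef]; ring⟩
    · rw [hwdef, show dA * w * (q / p) = dA * (w * (q / p)) by ring,
        Nat.mul_div_cancel_left _ (Nat.pos_of_ne_zero hdA0)]

/-- Perfect off-diagonal cancellation: for a primitive Dirichlet character `χ`
mod `q` and distinct divisors `d₁ ≠ d₂` of `q^{k-1}`, the sum over a full
period `q^k` of `1_{d₁∣a+m₁} χ((a+m₁)/d₁) ⋅ conj(1_{d₂∣a+m₂} χ((a+m₂)/d₂))`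
vanishes. -/
theorem off_diagonal_cancellation (q k : ℕ) (hq : 1 ≤ q) (hk : 1 ≤ k)
    (χ : DirichletCharacter ℂ q) (hχ : χ.IsPrimitive)
    (d₁ d₂ : ℕ) (hd₁ : d₁ ∣ q ^ (k - 1)) (hd₂ : d₂ ∣ q ^ (k - 1))
    (hne : d₁ ≠ d₂) (m₁ m₂ : ℕ) :
    ∑ a ∈ Finset.Icc 1 (q ^ k),
      (if d₁ ∣ a + m₁ then χ (((a + m₁) / d₁ : ℕ) : ZMod q) else 0) *
        (starRingEnd ℂ)
          (if d₂ ∣ a + m₂ then χ (((a + m₂) / d₂ : ℕ) : ZMod q) else 0)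
      = 0 := by
  have hq0 : q ≠ 0 := by omega
  haveI : NeZero q := ⟨hq0⟩
  have hqk0 : q ^ (k - 1) ≠ 0 := pow_ne_zero _ hq0
  have hd₁0 : d₁ ≠ 0 := by rintro rfl; exact hqk0 (zero_dvd_iff.mp hd₁)
  have hd₂0 : d₂ ≠ 0 := by rintro rfl; exact hqk0 (zero_dvd_iff.mp hd₂)
  set N := q ^ k with hN
  set F₁ : ℕ → ℂ := fun a => if d₁ ∣ a + m₁ then χ (((a + m₁) / d₁ : ℕ) : ZMod q) else 0
    with hF₁
  set F₂ : ℕ → ℂ := fun a => (starRingEnd ℂ)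
      (if d₂ ∣ a + m₂ then χ (((a + m₂) / d₂ : ℕ) : ZMod q) else 0) with hF₂
  show ∑ a ∈ Finset.Icc 1 N, F₁ a * F₂ a = 0
  obtain ⟨hdN₁, hqN₁⟩ := div_facts hk hd₁ hd₁0
  obtain ⟨hdN₂, hqN₂⟩ := div_facts hk hd₂ hd₂0
  have hper : ∀ a, F₁ (a + N) * F₂ (a + N) = F₁ a * F₂ a := by
    intro a
    have h1 : F₁ (a + N) = F₁ a := by
      simp only [hF₁]; exact inv_shift χ hdN₁ hqN₁ a
    have h2 : F₂ (a + N) = F₂ a := by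
      simp only [hF₂]; exact congrArg _ (inv_shift χ hdN₂ hqN₂ a)
    rw [h1, h2]
  have hIcc : ∑ a ∈ Finset.Icc 1 N, F₁ a * F₂ a = ∑ a ∈ range N, F₁ a * F₂ a := by
    rw [← Finset.Ico_add_one_right_eq_Icc, Finset.sum_Ico_eq_sum_range]
    simp only [Nat.add_sub_cancel]
    calc ∑ i ∈ range N, F₁ (1 + i) * F₂ (1 + i)
        = ∑ i ∈ range N, F₁ (i + 1) * F₂ (i + 1) := by
          refine Finset.sum_congr rfl fun i _ => ?_
          rw [add_comm]
      _ = ∑ i ∈ range N, F₁ i * F₂ i :=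
          periodic_sum_shift (F := fun a => F₁ a * F₂ a) hper 1
  rw [hIcc]
  obtain ⟨p, hp, hab⟩ : ∃ p : ℕ, p.Prime ∧ d₁.factorization p ≠ d₂.factorization p := by
    by_contra hcon
    push_neg at hcon
    apply hne
    have hfac : d₁.factorization = d₂.factorization := by
      ext r
      by_cases hr : r.Prime
      · exact hcon r hr
      · simp [Nat.factorization_eq_zero_of_not_prime _ hr]
    exact Nat.factorization_inj hd₁0 hd₂0 hfac
  rcases lt_or_gt_of_ne hab with hlt | hlt
  · -- `d₁` side invariant, `d₂` side averaged
    obtain ⟨H, hInv, hAvg⟩ := core hq0 hk hχ hd₁ hd₂ hp hlt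
    have hkill := kill_lemma (N := N) (H := H) hp.pos (F := F₂) (G := F₁)
      (fun a => by rw [mul_comm (F₂ (a + N)), hper, mul_comm])
      (fun a => by simp only [hF₁]; exact hInv a m₁)
      (fun a => by
        simp only [hF₂]
        rw [← map_sum, hAvg a m₂, map_zero])
    calc ∑ a ∈ range N, F₁ a * F₂ a
        = ∑ a ∈ range N, F₂ a * F₁ a :=
          Finset.sum_congr rfl fun a _ => mul_comm _ _
      _ = 0 := hkill
  · -- `d₂` side invariant, `d₁` side averaged
    obtain ⟨H, hInv, hAvg⟩ := core hq0 hk hχ hd₂ hd₁ hp hlt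
    exact kill_lemma hp.pos hper
      (fun a => by simp only [hF₂]; exact congrArg _ (hInv a m₂))
      (fun a => by simp only [hF₁]; exact hAvg a m₁)
end

section
/- Let h : ℕ+ → S¹ be completely multiplicative and X ≥ 2. Define the Euler product 𝔖 = ∏_p (1 - h(p)/p^{1+1/log X})^{-1}. If ∑_{p ≤ X} (1 - Re h(p))/p ≤ B, then there are constants c(B), C(B) > 0 with c(B) log X ≤ |𝔖| ≤ C(B) log X. -/
open Real Finset

namespace EPaux

lemma rpow_anti {σ : ℝ} (hσ : 0 < σ) : AntitoneOn (fun x : ℝ => x ^ (-σ)) (Set.Ici 1) := by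
  intro a ha b hb hab
  simp only [Set.mem_Ici] at ha hb
  have ha0 : (0:ℝ) < a := by linarith
  show b ^ (-σ) ≤ a ^ (-σ)
  rw [Real.rpow_neg (by linarith), Real.rpow_neg (by linarith)]
  exact inv_anti₀ (Real.rpow_pos_of_pos ha0 _) (Real.rpow_le_rpow ha0.le hab hσ.le)

lemma zeta_upper {σ : ℝ} (hσ : 1 < σ) :
    ∑' n : ℕ, (n:ℝ) ^ (-σ) ≤ 1 + 1/(σ-1) := by
  apply Real.tsum_le_of_sum_range_le (fun n => Real.rpow_nonneg (Nat.cast_nonneg n) _)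
  intro m
  have key : ∀ M : ℕ, ∑ i ∈ range (M+2), (i:ℝ) ^ (-σ) ≤ 1 + 1/(σ-1) := by
    intro M
    have hsplit : ∑ i ∈ range (M+2), (i:ℝ) ^ (-σ)
        = 1 + ∑ i ∈ Ico 1 (M+1), (((i+1:ℕ)):ℝ) ^ (-σ) := by
      have e1 : ∑ i ∈ Ico 1 (M+1), (((i+1:ℕ)):ℝ) ^ (-σ)
          = ∑ i ∈ Ico 2 (M+2), (i:ℝ) ^ (-σ) :=
        Finset.sum_Ico_add' (fun i : ℕ => (i:ℝ) ^ (-σ)) 1 (M+1) 1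
      rw [e1, Finset.range_eq_Ico,
        ← Finset.sum_Ico_consecutive (fun i : ℕ => (i:ℝ)^(-σ)) (Nat.zero_le 2) (by omega)]
      have e2 : ∑ i ∈ (Ico 0 2 : Finset ℕ), (i:ℝ) ^ (-σ) = 1 := by
        rw [show (Ico 0 2 : Finset ℕ) = ({0,1} : Finset ℕ) from rfl,
          Finset.sum_insert (by decide), Finset.sum_singleton, Nat.cast_zero, Nat.cast_one,
          Real.zero_rpow (by linarith), Real.one_rpow]
        norm_num
      rw [e2]
    rw [hsplit]
    have hint : ∑ i ∈ Ico 1 (M+1), (((i+1:ℕ)):ℝ) ^ (-σ) ≤ ∫ x in (1:ℕ)..(M+1:ℕ), x ^ (-σ) := by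
      refine AntitoneOn.sum_le_integral_Ico (a := 1) (b := M+1)
        (f := fun x : ℝ => x ^ (-σ)) (by omega) ?_
      apply (rpow_anti (by linarith)).mono
      intro t ht
      simp only [Set.mem_Icc] at ht
      simpa using ht.1
    have hval : ∫ x in (1:ℕ)..(M+1:ℕ), x ^ (-σ) = (((M+1:ℕ):ℝ) ^ (1-σ) - 1)/(1-σ) := by
      rw [integral_rpow]
      · rw [Nat.cast_one, Real.one_rpow, show (-σ+1) = (1-σ) by ring]
      · right
        refine ⟨by intro hc; nlinarith, ?_⟩
        intro hc
        rw [Set.mem_uIcc] at hc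
        push_cast at hc
        rcases hc with ⟨h1, _⟩ | ⟨h1, _⟩ <;> linarith
    have htail : ∑ i ∈ Ico 1 (M+1), (((i+1:ℕ)):ℝ) ^ (-σ) ≤ 1/(σ-1) := by
      refine hint.trans ?_
      rw [hval]
      have hnn : (0:ℝ) ≤ ((M+1:ℕ):ℝ) ^ (1-σ) := Real.rpow_nonneg (by positivity) _
      have e : (((M+1:ℕ):ℝ) ^ (1-σ) - 1)/(1-σ) = (1 - ((M+1:ℕ):ℝ) ^ (1-σ))/(σ-1) := by
        rw [div_eq_div_iff (by linarith) (by linarith)]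
        ring
      rw [e]
      gcongr
      · linarith
    linarith
  calc ∑ i ∈ range m, (i:ℝ) ^ (-σ) ≤ ∑ i ∈ range (m+2), (i:ℝ) ^ (-σ) := by
        apply Finset.sum_le_sum_of_subset_of_nonneg
        · exact Finset.range_subset_range.mpr (by omega)
        · exact fun i _ _ => Real.rpow_nonneg (Nat.cast_nonneg i) _
    _ ≤ 1 + 1/(σ-1) := key m

lemma telescope : ∀ N : ℕ, 1 ≤ N → ∑ n ∈ Icc 2 N, (1:ℝ)/(n*(n-1)) ≤ 1 - 1/N := by
  intro N
  induction N with
  | zero => omega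
  | succ N ih =>
    intro _
    rcases Nat.lt_or_ge N 1 with hN | hN
    · interval_cases N
      · simp
    · rw [Finset.sum_Icc_succ_top (by omega : 2 ≤ N+1)]
      have hN' : (1:ℝ) ≤ N := by exact_mod_cast hN
      have h1 : (1:ℝ)/((N+1)*((N+1)-1)) = 1/N - 1/(N+1) := by
        have hN0 : (N:ℝ) ≠ 0 := (by linarith : (0:ℝ) < N).ne'
        field_simp
        ring_nf
        exact mul_inv_cancel₀ hN0
      have h2 := ih hN
      push_cast
      push_cast at h1
      rw [h1]
      linarith

-- upper bound: -log|1-z| ≤ x + 2x² when |z| = x ≤ 1/2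
lemma neg_log_le {z : ℂ} {x : ℝ} (hx : ‖z‖ = x) (hx2 : x ≤ 1/2) :
    -Real.log (‖1 - z‖) ≤ x + 2*x^2 := by
  have hx0 : 0 ≤ x := hx ▸ norm_nonneg z
  have h1 : 1 - x ≤ ‖1 - z‖ := by
    have := norm_sub_norm_le (1 : ℂ) z
    simpa [hx] using this
  have hpos : (0:ℝ) < 1 - x := by linarith
  have hmono : Real.log (1 - x) ≤ Real.log (‖1 - z‖) :=
    Real.log_le_log hpos h1
  have h2 : 1 - (1-x)⁻¹ ≤ Real.log (1 - x) := Real.one_sub_inv_le_log_of_pos hpos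
  have h3 : (1-x)⁻¹ ≤ 1 + x + 2*x^2 := by
    rw [inv_le_iff_one_le_mul₀ hpos]
    nlinarith
  linarith

-- lower bound: Re z - |z|²/2 ≤ -log|1-z| when |z| < 1
lemma le_neg_log {z : ℂ} (hz : ‖z‖ < 1) :
    z.re - (‖z‖)^2/2 ≤ -Real.log (‖1 - z‖) := by
  have hzne : 1 - z ≠ 0 := by
    intro hc
    rw [sub_eq_zero] at hc
    rw [← hc] at hz
    simp at hz
  have hpos : 0 < ‖1 - z‖ := norm_pos_iff.mpr hzne
  have habs : (‖1-z‖)^2 = 1 - 2*z.re + (‖z‖)^2 := by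
    rw [Complex.sq_norm, Complex.sq_norm, Complex.normSq_apply, Complex.normSq_apply]
    simp [Complex.sub_re, Complex.sub_im]
    ring
  have hlog : Real.log ((‖1-z‖)^2) ≤ (1 - 2*z.re + (‖z‖)^2) - 1 := by
    rw [← habs]
    exact Real.log_le_sub_one_of_pos (pow_pos hpos 2)
  rw [Real.log_pow] at hlog
  push_cast at hlog
  linarith

lemma neg_log_le_real {x : ℝ} (h0 : 0 ≤ x) (h2 : x ≤ 1/2) :
    -Real.log (1-x) ≤ x + 2*x^2 := by
  have hpos : (0:ℝ) < 1 - x := by linarith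
  have h3 : (1-x)⁻¹ ≤ 1 + x + 2*x^2 := by
    rw [inv_le_iff_one_le_mul₀ hpos]
    nlinarith
  have h4 := Real.one_sub_inv_le_log_of_pos hpos
  linarith

lemma mertens1 (N : ℕ) (hN : 2 ≤ N) :
    ∑ p ∈ Nat.primesBelow (N+1), Real.log p / p ≤ Real.log N + Real.log 4 := by
  set Q := Nat.primesBelow (N+1) with hQ
  have hNpos : (0:ℝ) < N := by positivity
  have hswap : ∑ n ∈ Icc 1 N, ∑ p ∈ n.primeFactors, Real.log p
      = ∑ p ∈ Q, ((N/p : ℕ) : ℝ) * Real.log p := by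
    have h1 : ∀ n ∈ Icc 1 N, ∑ p ∈ n.primeFactors, Real.log p
        = ∑ p ∈ Q, if p ∣ n then Real.log p else 0 := by
      intro n hn
      simp only [Finset.mem_Icc] at hn
      rw [← Finset.sum_filter]
      congr 1
      ext q
      rw [Finset.mem_filter, Nat.mem_primesBelow, Nat.mem_primeFactors]
      constructor
      · rintro ⟨hq1, hq2, -⟩
        have hqn : q ≤ n := Nat.le_of_dvd (by omega) hq2
        exact ⟨⟨by omega, hq1⟩, hq2⟩
      · rintro ⟨⟨hq1, hq2⟩, hq3⟩
        exact ⟨hq2, hq3, by omega⟩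
    rw [Finset.sum_congr rfl h1, Finset.sum_comm]
    apply Finset.sum_congr rfl
    intro p _
    have hIoc : Icc 1 N = Ioc 0 N := by ext a; simp [Nat.lt_iff_add_one_le]
    rw [← Finset.sum_filter, Finset.sum_const, hIoc, Nat.Ioc_filter_dvd_card_eq_div,
      nsmul_eq_mul]
  have hθ : ∑ p ∈ Q, Real.log p ≤ (N:ℝ) * Real.log 4 := by
    have hprimQ : ∀ p ∈ Q, p.Prime := fun p hp => Nat.prime_of_mem_primesBelow hp
    have h1 : ∑ p ∈ Q, Real.log p = Real.log ((primorial N : ℕ) : ℝ) := by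
      rw [show (primorial N : ℝ) = ∏ p ∈ Q, (p:ℝ) by rw [primorial]; push_cast; rfl,
        Real.log_prod]
      intro p hp
      exact_mod_cast (hprimQ p hp).pos.ne'
    rw [h1]
    have hppos : 0 < primorial N := by
      rw [primorial]
      exact Finset.prod_pos fun p hp => ((Finset.mem_filter.mp hp).2).pos
    calc Real.log ((primorial N : ℕ) : ℝ) ≤ Real.log ((4^N : ℕ) : ℝ) := by
          apply Real.log_le_log (by exact_mod_cast hppos)
          exact_mod_cast primorial_le_4_pow N
      _ = (N:ℝ) * Real.log 4 := by push_cast; rw [Real.log_pow]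
  have hinner : ∀ n ∈ Icc 1 N, ∑ p ∈ n.primeFactors, Real.log p ≤ Real.log N := by
    intro n hn
    simp only [Finset.mem_Icc] at hn
    have hne : ∀ p ∈ n.primeFactors, (p:ℝ) ≠ 0 := by
      intro p hp
      exact_mod_cast (Nat.prime_of_mem_primeFactors hp).pos.ne'
    rw [← Real.log_prod hne]
    have hdvd : (∏ p ∈ n.primeFactors, p) ≤ n :=
      Nat.le_of_dvd (by omega) (Nat.prod_primeFactors_dvd n)
    apply Real.log_le_log
    · rw [show (∏ p ∈ n.primeFactors, (p:ℝ)) = ((∏ p ∈ n.primeFactors, p : ℕ) : ℝ) by push_cast; rfl]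
      exact_mod_cast Nat.pos_of_ne_zero (Finset.prod_ne_zero_iff.mpr
        (fun p hp => (Nat.prime_of_mem_primeFactors hp).pos.ne'))
    · rw [show (∏ p ∈ n.primeFactors, (p:ℝ)) = ((∏ p ∈ n.primeFactors, p : ℕ) : ℝ) by push_cast; rfl]
      exact_mod_cast hdvd.trans hn.2
  have h2 : ∑ p ∈ Q, ((N/p : ℕ) : ℝ) * Real.log p ≤ (N:ℝ) * Real.log N := by
    rw [← hswap]
    calc ∑ n ∈ Icc 1 N, ∑ p ∈ n.primeFactors, Real.log p
        ≤ ∑ _n ∈ Icc 1 N, Real.log N := Finset.sum_le_sum hinner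
      _ = (N:ℝ) * Real.log N := by
          rw [Finset.sum_const, Nat.card_Icc, nsmul_eq_mul]
          norm_num
  have hfloor : ∀ p ∈ Q, ((N:ℝ)/p - 1) * Real.log p ≤ ((N/p : ℕ) : ℝ) * Real.log p := by
    intro p hp
    have hprime := Nat.prime_of_mem_primesBelow hp
    have hp0 : (0:ℝ) < p := by exact_mod_cast hprime.pos
    apply mul_le_mul_of_nonneg_right _ (Real.log_natCast_nonneg p)
    have hdm := Nat.div_add_mod N p
    have hmlt : N % p < p := Nat.mod_lt _ hprime.pos
    have hdm' : (p:ℝ) * ((N/p : ℕ) : ℝ) + ((N % p : ℕ) : ℝ) = (N:ℝ) := by exact_mod_cast hdm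
    have hmlt' : ((N % p : ℕ) : ℝ) < (p:ℝ) := by exact_mod_cast hmlt
    rw [sub_le_iff_le_add, div_le_iff₀ hp0]
    nlinarith
  have h3 : ∑ p ∈ Q, ((N:ℝ)/p - 1) * Real.log p ≤ (N:ℝ) * Real.log N :=
    (Finset.sum_le_sum hfloor).trans h2
  have h4 : ∑ p ∈ Q, ((N:ℝ)/p - 1) * Real.log p
      = (N:ℝ) * (∑ p ∈ Q, Real.log p / p) - ∑ p ∈ Q, Real.log p := by
    rw [Finset.mul_sum, ← Finset.sum_sub_distrib]
    apply Finset.sum_congr rfl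
    intro p hp
    have hp0 : (0:ℝ) < p := by exact_mod_cast (Nat.prime_of_mem_primesBelow hp).pos
    field_simp
  have h5 : (N:ℝ) * (∑ p ∈ Q, Real.log p / p) ≤ (N:ℝ) * (Real.log N + Real.log 4) := by
    nlinarith
  exact le_of_mul_le_mul_left h5 hNpos

lemma mertens2 {X : ℝ} (hX : 2 ≤ X) :
    Real.log (Real.log X) ≤ (∑ p ∈ Nat.primesBelow (⌊X⌋₊+1), 1/(p:ℝ)) + 1 := by
  set N := ⌊X⌋₊ with hNdef
  have hN2 : 2 ≤ N := Nat.le_floor (by exact_mod_cast hX)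
  set Q := Nat.primesBelow (N+1) with hQdef
  have hA : Real.log X ≤ (harmonic N : ℝ) := log_le_harmonic_floor X (by linarith)
  let fm : ℕ →* ℝ :=
    { toFun := fun n => (n:ℝ)⁻¹
      map_one' := by norm_num
      map_mul' := by intro a b; push_cast; rw [mul_inv] }
  have hlt : ∀ {p : ℕ}, p.Prime → ‖fm p‖ < 1 := by
    intro p hp
    have h2 : (2:ℝ) ≤ p := by exact_mod_cast hp.two_le
    rw [show fm p = (p:ℝ)⁻¹ from rfl, Real.norm_eq_abs, abs_of_nonneg (by positivity)]
    exact inv_lt_one_of_one_lt₀ (by linarith)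
  obtain ⟨hsumm, hhs⟩ :=
    EulerProduct.summable_and_hasSum_smoothNumbers_prod_primesBelow_geometric (f := fm) hlt (N+1)
  have hprod : (harmonic N : ℝ) ≤ ∏ p ∈ Q, (1 - (p:ℝ)⁻¹)⁻¹ := by
    have hmem : ∀ n ∈ Icc 1 N, n ∈ Nat.smoothNumbers (N+1) := by
      intro n hn
      simp only [Finset.mem_Icc] at hn
      rw [Nat.mem_smoothNumbers]
      refine ⟨by omega, fun p hp => ?_⟩
      have h1 : p ∣ n := Nat.dvd_of_mem_primeFactorsList hp
      have := Nat.le_of_dvd (by omega) h1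
      omega
    have hind : Summable (Set.indicator (Nat.smoothNumbers (N+1)) (fun n => (n:ℝ)⁻¹)) := by
      rw [← summable_subtype_iff_indicator]
      exact hsumm.of_norm
    have h1 : (harmonic N : ℝ) = ∑ n ∈ Icc 1 N,
        Set.indicator (Nat.smoothNumbers (N+1)) (fun n => (n:ℝ)⁻¹) n := by
      rw [harmonic_eq_sum_Icc]
      push_cast
      exact Finset.sum_congr rfl fun n hn => (Set.indicator_of_mem (hmem n hn) (fun n : ℕ => (n:ℝ)⁻¹)).symm
    rw [h1]
    calc ∑ n ∈ Icc 1 N, Set.indicator (Nat.smoothNumbers (N+1)) (fun n => (n:ℝ)⁻¹) n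
        ≤ ∑' n : ℕ, Set.indicator (Nat.smoothNumbers (N+1)) (fun n => (n:ℝ)⁻¹) n := by
          apply hind.sum_le_tsum
          intro n _
          apply Set.indicator_apply_nonneg
          intro _
          positivity
      _ = ∑' m : ↥(Nat.smoothNumbers (N+1)), ((m:ℕ):ℝ)⁻¹ := (_root_.tsum_subtype _ _).symm
      _ = ∏ p ∈ Q, (1 - (p:ℝ)⁻¹)⁻¹ := hhs.tsum_eq
  have hC : ∏ p ∈ Q, (1 - (p:ℝ)⁻¹)⁻¹ ≤ Real.exp ((∑ p ∈ Q, 1/(p:ℝ)) + 1) := by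
    have hterm : ∀ p ∈ Q, (1 - (p:ℝ)⁻¹)⁻¹ ≤ Real.exp (1/(p:ℝ) + 1/((p:ℝ)*((p:ℝ)-1))) := by
      intro p hp
      have hp2 : (2:ℝ) ≤ p := by exact_mod_cast (Nat.prime_of_mem_primesBelow hp).two_le
      have hp0 : (p:ℝ) ≠ 0 := by linarith
      have hp1 : (p:ℝ) - 1 ≠ 0 := by intro hc; nlinarith
      have he : (1 - (p:ℝ)⁻¹)⁻¹ = 1 + 1/((p:ℝ)-1) := by
        have h0 : (1 - (p:ℝ)⁻¹) = ((p:ℝ)-1)/p := by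
          rw [sub_div, div_self hp0, one_div]
        rw [h0, inv_div, div_eq_iff hp1, add_mul, one_mul, div_mul_cancel₀ _ hp1]
        ring
      have harg : 1/((p:ℝ)-1) = 1/(p:ℝ) + 1/((p:ℝ)*((p:ℝ)-1)) := by
        field_simp
        ring
      rw [he, ← harg]
      have := Real.add_one_le_exp (1/((p:ℝ)-1))
      linarith
    calc ∏ p ∈ Q, (1 - (p:ℝ)⁻¹)⁻¹
        ≤ ∏ p ∈ Q, Real.exp (1/(p:ℝ) + 1/((p:ℝ)*((p:ℝ)-1))) := by
          apply Finset.prod_le_prod _ hterm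
          intro p hp
          have hp2 : (2:ℝ) ≤ p := by exact_mod_cast (Nat.prime_of_mem_primesBelow hp).two_le
          have : 1 - (p:ℝ)⁻¹ > 0 := by
            have : (p:ℝ)⁻¹ ≤ 2⁻¹ := by
              apply inv_anti₀ <;> linarith
            linarith
          positivity
      _ = Real.exp (∑ p ∈ Q, (1/(p:ℝ) + 1/((p:ℝ)*((p:ℝ)-1)))) := (Real.exp_sum _ _).symm
      _ ≤ Real.exp ((∑ p ∈ Q, 1/(p:ℝ)) + 1) := by
          rw [Real.exp_le_exp, Finset.sum_add_distrib]
          have hsub : Q ⊆ Icc 2 N := by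
            intro p hp
            rw [Nat.mem_primesBelow] at hp
            exact Finset.mem_Icc.mpr ⟨hp.2.two_le, by omega⟩
          have h1 : ∑ p ∈ Q, 1/((p:ℝ)*((p:ℝ)-1)) ≤ ∑ n ∈ Icc 2 N, (1:ℝ)/(n*((n:ℝ)-1)) := by
            apply Finset.sum_le_sum_of_subset_of_nonneg hsub
            intro i hi _
            have h2i : (2:ℝ) ≤ i := by exact_mod_cast (Finset.mem_Icc.mp hi).1
            apply le_of_lt
            apply div_pos one_pos
            nlinarith
          have h2 := telescope N (by omega)
          have h3 : (0:ℝ) ≤ 1/(N:ℝ) := by positivity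
          linarith
  have hXpos : 0 < Real.log X := Real.log_pos (by linarith)
  calc Real.log (Real.log X)
      ≤ Real.log (Real.exp ((∑ p ∈ Q, 1/(p:ℝ)) + 1)) :=
        Real.log_le_log hXpos (hA.trans (hprod.trans hC))
    _ = (∑ p ∈ Q, 1/(p:ℝ)) + 1 := Real.log_exp _

-- master identity from aux2, restated here for standalone compile
lemma norm_tprod_eq' {f : ℕ →*₀ ℂ} (hsum : Summable fun n => ‖f n‖) :
    ‖∏' p : Nat.Primes, (1 - f (p:ℕ))⁻¹‖ =
      Real.exp (∑' p : Nat.Primes, -Real.log (‖1 - f (p:ℕ)‖)) := by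
  rw [EulerProduct.eulerProduct_completely_multiplicative_tprod hsum,
      ← EulerProduct.exp_tsum_primes_log_eq_tsum hsum]
  have hsummable : Summable (fun p : Nat.Primes => -Complex.log (1 - f (p:ℕ))) :=
    hsum.of_norm.clog_one_sub.neg.subtype _
  rw [Complex.norm_exp, Complex.re_tsum hsummable]
  exact congrArg Real.exp (tsum_congr fun p => by simp [Complex.log_re])

/-- The completely multiplicative function `n ↦ h n · n^{-σ}` as a `MonoidWithZeroHom`. -/
noncomputable def EPf (h : ℕ → ℂ) (σ : ℝ) (h1 : h 1 = 1)
    (hmul : ∀ m n, 0 < m → 0 < n → h (m * n) = h m * h n) : ℕ →*₀ ℂ where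
  toFun n := if n = 0 then 0 else h n * (n:ℂ) ^ (-(σ:ℂ))
  map_zero' := by simp
  map_one' := by simp [h1]
  map_mul' := by
    intro m n
    rcases eq_or_ne m 0 with hm | hm
    · simp [hm]
    rcases eq_or_ne n 0 with hn | hn
    · simp [hn]
    have hmn : m * n ≠ 0 := mul_ne_zero hm hn
    simp only [if_neg hm, if_neg hn, if_neg hmn]
    rw [hmul m n (Nat.pos_of_ne_zero hm) (Nat.pos_of_ne_zero hn)]
    have key := Complex.mul_cpow_ofReal_nonneg (Nat.cast_nonneg m) (Nat.cast_nonneg n) (-(σ:ℂ))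
    push_cast at key ⊢
    rw [key]
    ring

lemma EPf_apply (h : ℕ → ℂ) (σ : ℝ) (h1 : h 1 = 1)
    (hmul : ∀ m n, 0 < m → 0 < n → h (m * n) = h m * h n) (n : ℕ) :
    EPf h σ h1 hmul n = if n = 0 then 0 else h n * (n:ℂ) ^ (-(σ:ℂ)) := rfl

lemma tsum_primes_eq (u : ℕ → ℝ) :
    ∑' p : Nat.Primes, u (p:ℕ) = ∑' n : ℕ, (if n.Prime then u n else 0) := by
  have h1 := _root_.tsum_subtype {p : ℕ | p.Prime} u
  refine Eq.trans (by rfl) (h1.trans (tsum_congr fun n => ?_))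
  by_cases hn : n.Prime <;> simp [Set.indicator_apply, Set.mem_setOf_eq, hn]

lemma norm_eq_exp {σ : ℝ} (hσ : 1 < σ) (h : ℕ → ℂ)
    (hnorm : ∀ n, 0 < n → ‖h n‖ = 1)
    (hmul : ∀ m n, 0 < m → 0 < n → h (m * n) = h m * h n) :
    ‖∏' p : Nat.Primes, (1 - h (p:ℕ) / ((p:ℕ):ℂ) ^ (σ:ℂ))⁻¹‖
      = Real.exp (∑' n : ℕ,
          if n.Prime then -Real.log (‖1 - h n * (((n:ℝ) ^ (-σ) : ℝ) : ℂ)‖) else 0)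
    ∧ ‖∑' n : ℕ, (if n = 0 then (0:ℂ) else h n * (((n:ℝ) ^ (-σ) : ℝ) : ℂ))‖
      = Real.exp (∑' n : ℕ,
          if n.Prime then -Real.log (‖1 - h n * (((n:ℝ) ^ (-σ) : ℝ) : ℂ)‖) else 0) := by
  have h1 : h 1 = 1 := by
    have hm := hmul 1 1 one_pos one_pos
    rw [mul_one] at hm
    have hn := hnorm 1 one_pos
    have hz : h 1 * (h 1 - 1) = 0 := by rw [mul_sub, ← hm]; ring
    rcases mul_eq_zero.mp hz with h0 | h0
    · rw [h0] at hn; simp at hn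
    · exact sub_eq_zero.mp h0
  set F := EPf h σ h1 hmul with hFdef
  have hFval : ∀ n : ℕ, n ≠ 0 → F n = h n * (((n:ℝ) ^ (-σ) : ℝ) : ℂ) := by
    intro n hn
    rw [hFdef, EPf_apply, if_neg hn]
    congr 1
    rw [show (-(σ:ℂ)) = ((-σ : ℝ):ℂ) by push_cast; ring,
      ← Complex.ofReal_natCast n, ← Complex.ofReal_cpow (Nat.cast_nonneg n)]
  have hFnorm : ∀ n : ℕ, ‖F n‖ = (n:ℝ) ^ (-σ) := by
    intro n
    rcases eq_or_ne n 0 with h0 | h0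
    · rw [h0, hFdef, EPf_apply, if_pos rfl]
      simp [Real.zero_rpow (show -σ ≠ 0 by intro hc; nlinarith)]
    · rw [hFval n h0, norm_mul, hnorm n (Nat.pos_of_ne_zero h0), one_mul,
        Complex.norm_real, Real.norm_eq_abs,
        abs_of_nonneg (Real.rpow_nonneg (Nat.cast_nonneg n) _)]
  have hFsum : Summable (fun n => ‖F n‖) := by
    rw [show (fun n => ‖F n‖) = (fun n : ℕ => (n:ℝ) ^ (-σ)) from funext hFnorm]
    exact Real.summable_nat_rpow.mpr (by linarith)
  have hprodeq : (∏' p : Nat.Primes, (1 - h (p:ℕ) / ((p:ℕ):ℂ) ^ (σ:ℂ))⁻¹)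
      = ∏' p : Nat.Primes, (1 - F (p:ℕ))⁻¹ := by
    refine tprod_congr fun p => ?_
    have hp0 : (p:ℕ) ≠ 0 := p.prop.pos.ne'
    rw [hFdef, EPf_apply, if_neg hp0, Complex.cpow_neg, div_eq_mul_inv]
  have hcong : (∑' n : ℕ, (if n.Prime then -Real.log (‖1 - F n‖) else 0))
      = ∑' n : ℕ,
          if n.Prime then -Real.log (‖1 - h n * (((n:ℝ) ^ (-σ) : ℝ) : ℂ)‖) else 0 := by
    refine tsum_congr fun n => ?_
    by_cases hn : n.Prime
    · rw [if_pos hn, if_pos hn, hFval n hn.pos.ne']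
    · rw [if_neg hn, if_neg hn]
  have hmain : ‖∏' p : Nat.Primes, (1 - h (p:ℕ) / ((p:ℕ):ℂ) ^ (σ:ℂ))⁻¹‖
      = Real.exp (∑' n : ℕ,
          if n.Prime then -Real.log (‖1 - h n * (((n:ℝ) ^ (-σ) : ℝ) : ℂ)‖) else 0) := by
    rw [hprodeq, norm_tprod_eq' hFsum,
      tsum_primes_eq (fun n => -Real.log (‖1 - F n‖)), hcong]
  refine ⟨hmain, ?_⟩
  have htseq : (∑' n : ℕ, (if n = 0 then (0:ℂ) else h n * (((n:ℝ) ^ (-σ) : ℝ) : ℂ)))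
      = ∑' n : ℕ, F n := by
    refine tsum_congr fun n => ?_
    rcases eq_or_ne n 0 with h0 | h0
    · rw [if_pos h0, h0, map_zero]
    · rw [if_neg h0, hFval n h0]
  rw [htseq, ← EulerProduct.eulerProduct_completely_multiplicative_tprod hFsum, ← hprodeq, hmain]

set_option maxHeartbeats  2000000 in
lemma main {B X : ℝ} (hX : 2 ≤ X) (h : ℕ → ℂ)
    (hnorm : ∀ n, 0 < n → ‖h n‖ = 1)
    (hmul : ∀ m n, 0 < m → 0 < n → h (m * n) = h m * h n)
    (hB : ∑ p ∈ (Finset.range (⌊X⌋₊ + 1)).filter Nat.Prime, (1 - (h p).re) / p ≤ B) :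
    Real.exp (-(B+20)) * Real.log X ≤
        ‖∏' p : Nat.Primes,
            (1 - h (p:ℕ) / ((p:ℕ):ℂ) ^ ((1 + 1/Real.log X : ℝ):ℂ))⁻¹‖ ∧
      ‖∏' p : Nat.Primes,
          (1 - h (p:ℕ) / ((p:ℕ):ℂ) ^ ((1 + 1/Real.log X : ℝ):ℂ))⁻¹‖ ≤
        Real.exp 6 * Real.log X := by
  have hl2 : Real.log 2 ≤ Real.log X := Real.log_le_log two_pos hX
  have hl7 : (0.6931:ℝ) ≤ Real.log X := le_trans (by linarith [Real.log_two_gt_d9]) hl2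
  set l := Real.log X with hldef
  have hlpos : 0 < l := by linarith
  set σ := 1 + 1/l with hσdef
  have hσ1 : 1 < σ := by
    rw [hσdef]
    have h0 : 0 < 1/l := by positivity
    linarith
  have hσ2 : σ ≤ 2.5 := by
    have h1 : 1/l ≤ 1/0.6931 := by
      apply div_le_div_of_nonneg_left (by norm_num) (by norm_num) hl7
    have h2 : (1:ℝ)/0.6931 ≤ 1.5 := by norm_num
    linarith
  have hσm : σ - 1 = 1/l := by rw [hσdef]; ring
  -- pointwise facts
  have hxnn : ∀ n : ℕ, (0:ℝ) ≤ (n:ℝ) ^ (-σ) := fun n => Real.rpow_nonneg (Nat.cast_nonneg n) _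
  have hxhalf : ∀ p : ℕ, p.Prime → (p:ℝ) ^ (-σ) ≤ 1/2 := by
    intro p hp
    have h2 : (2:ℝ) ≤ p := by exact_mod_cast hp.two_le
    calc (p:ℝ) ^ (-σ) ≤ (2:ℝ) ^ (-σ) := by
          rw [Real.rpow_neg (by linarith), Real.rpow_neg (by norm_num)]
          exact inv_anti₀ (Real.rpow_pos_of_pos two_pos σ)
            (Real.rpow_le_rpow (by norm_num) h2 (by linarith))
      _ ≤ (2:ℝ) ^ (-(1:ℝ)) := Real.rpow_le_rpow_of_exponent_le (by norm_num) (by linarith)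
      _ = 1/2 := by rw [Real.rpow_neg_one]; norm_num
  have hxinv : ∀ p : ℕ, p.Prime → (p:ℝ) ^ (-σ) ≤ 1/(p:ℝ) := by
    intro p hp
    have h2 : (1:ℝ) ≤ p := by exact_mod_cast hp.one_lt.le
    calc (p:ℝ) ^ (-σ) ≤ (p:ℝ) ^ (-(1:ℝ)) :=
          Real.rpow_le_rpow_of_exponent_le h2 (by linarith)
      _ = 1/(p:ℝ) := by rw [Real.rpow_neg_one, one_div]
  have habsz : ∀ p : ℕ, p.Prime →
      ‖h p * (((p:ℝ) ^ (-σ) : ℝ) : ℂ)‖ = (p:ℝ) ^ (-σ) := by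
    intro p hp
    rw [norm_mul, Complex.norm_real, Real.norm_eq_abs, abs_of_nonneg (hxnn p),
      hnorm p hp.pos, one_mul]
  have hrez : ∀ p : ℕ, p.Prime →
      (h p * (((p:ℝ)^(-σ):ℝ):ℂ)).re = (h p).re * ((p:ℝ)^(-σ)) := by
    intro p hp
    rw [Complex.mul_re, Complex.ofReal_re, Complex.ofReal_im]
    ring
  have hre1 : ∀ p : ℕ, p.Prime → |(h p).re| ≤ 1 := by
    intro p hp
    have h1 := Complex.abs_re_le_norm (h p)
    rwa [hnorm p hp.pos] at h1
  -- summabilities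
  have SX : Summable (fun n : ℕ => (n:ℝ)^(-σ)) := Real.summable_nat_rpow.mpr (by linarith)
  have S2 : Summable (fun n : ℕ => (n:ℝ)^(-(2:ℝ))) := Real.summable_nat_rpow.mpr (by norm_num)
  have SxP : Summable (fun n : ℕ => if n.Prime then (n:ℝ)^(-σ) else 0) := by
    apply Summable.of_nonneg_of_le _ _ SX
    · intro n; by_cases hn : n.Prime <;> simp [hn, hxnn n]
    · intro n; by_cases hn : n.Prime <;> simp [hn, hxnn n]
  have hsqle : ∀ n : ℕ, (if n.Prime then ((n:ℝ)^(-σ))^2 else 0) ≤ (n:ℝ)^(-(2:ℝ)) := by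
    intro n
    by_cases hn : n.Prime
    · rw [if_pos hn]
      have h1 : (1:ℝ) ≤ n := by exact_mod_cast hn.one_lt.le
      have e : ((n:ℝ)^(-σ))^2 = (n:ℝ)^(-(2*σ)) := by
        rw [← Real.rpow_natCast ((n:ℝ)^(-σ)) 2, ← Real.rpow_mul (by linarith)]
        ring_nf
      rw [e]
      exact Real.rpow_le_rpow_of_exponent_le h1 (by nlinarith)
    · rw [if_neg hn]; exact Real.rpow_nonneg (Nat.cast_nonneg n) _
  have Ssq : Summable (fun n : ℕ => if n.Prime then ((n:ℝ)^(-σ))^2 else 0) := by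
    apply Summable.of_nonneg_of_le _ hsqle S2
    intro n; by_cases hn : n.Prime <;> simp [hn]
    positivity
  have hd0 : ∀ n : ℕ, 0 ≤ (if n.Prime then (1 - (h n).re) * (n:ℝ)^(-σ) else 0) := by
    intro n; by_cases hn : n.Prime
    · rw [if_pos hn]
      have h2 := abs_le.mp (hre1 n hn)
      have := hxnn n
      nlinarith
    · simp [hn]
  have hd2 : ∀ n : ℕ, (if n.Prime then (1 - (h n).re) * (n:ℝ)^(-σ) else 0)
      ≤ 2 * (if n.Prime then (n:ℝ)^(-σ) else 0) := by
    intro n; by_cases hn : n.Prime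
    · rw [if_pos hn, if_pos hn]
      have h2 := abs_le.mp (hre1 n hn)
      have := hxnn n
      nlinarith
    · simp [hn]
  have SdN : Summable (fun n : ℕ => if n.Prime then (1 - (h n).re) * (n:ℝ)^(-σ) else 0) :=
    Summable.of_nonneg_of_le hd0 hd2 (SxP.mul_left 2)
  have haeq : (fun n : ℕ => if n.Prime then (h n).re * (n:ℝ)^(-σ) else 0)
      = fun n : ℕ => (if n.Prime then (n:ℝ)^(-σ) else 0)
          - (if n.Prime then (1 - (h n).re) * (n:ℝ)^(-σ) else 0) := by
    funext n; by_cases hn : n.Prime <;> simp [hn]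
    ring
  have SaN : Summable (fun n : ℕ => if n.Prime then (h n).re * (n:ℝ)^(-σ) else 0) := by
    rw [haeq]; exact SxP.sub SdN
  -- pointwise bounds on the log terms
  have hg_up : ∀ n : ℕ,
      (if n.Prime then -Real.log (‖1 - h n * (((n:ℝ)^(-σ):ℝ):ℂ)‖) else 0)
      ≤ (if n.Prime then (n:ℝ)^(-σ) else 0) + 2 * (if n.Prime then ((n:ℝ)^(-σ))^2 else 0) := by
    intro n; by_cases hn : n.Prime
    · simp only [if_pos hn]
      exact neg_log_le (habsz n hn) (hxhalf n hn)
    · simp [hn]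
  have hg_lo : ∀ n : ℕ,
      (if n.Prime then (h n).re * (n:ℝ)^(-σ) else 0)
        - (if n.Prime then ((n:ℝ)^(-σ))^2 else 0)/2
      ≤ (if n.Prime then -Real.log (‖1 - h n * (((n:ℝ)^(-σ):ℝ):ℂ)‖) else 0) := by
    intro n; by_cases hn : n.Prime
    · simp only [if_pos hn]
      have hlt : ‖h n * (((n:ℝ)^(-σ):ℝ):ℂ)‖ < 1 := by
        rw [habsz n hn]; linarith [hxhalf n hn]
      have := le_neg_log hlt
      rw [habsz n hn, hrez n hn] at this
      exact this
    · simp [hn]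
  have SgN : Summable (fun n : ℕ =>
      if n.Prime then -Real.log (‖1 - h n * (((n:ℝ)^(-σ):ℝ):ℂ)‖) else 0) := by
    apply Summable.of_norm_bounded
      (g := fun n : ℕ => (if n.Prime then (n:ℝ)^(-σ) else 0)
        + 2 * (if n.Prime then ((n:ℝ)^(-σ))^2 else 0))
      (SxP.add (Ssq.mul_left 2))
    intro n
    rw [Real.norm_eq_abs, abs_le]
    constructor
    · have h1 := hg_lo n
      by_cases hn : n.Prime
      · simp only [if_pos hn] at h1 ⊢
        have h2 := abs_le.mp (hre1 n hn)
        have h3 := hxnn n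
        nlinarith [sq_nonneg ((n:ℝ)^(-σ))]
      · simp [hn]
    · exact hg_up n
  -- zeta values
  have hZ1 : (1:ℝ) ≤ ∑' n : ℕ, (n:ℝ)^(-σ) := by
    have h1 := Summable.le_tsum SX 1 (fun j _ => hxnn j)
    rwa [Nat.cast_one, Real.one_rpow] at h1
  have hZub : ∑' n : ℕ, (n:ℝ)^(-σ) ≤ 1 + l := by
    have := zeta_upper hσ1
    rwa [hσm, one_div_one_div] at this
  have hQsq : ∑' n : ℕ, (if n.Prime then ((n:ℝ)^(-σ))^2 else 0) ≤ 2 := by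
    refine (Summable.tsum_le_tsum hsqle Ssq S2).trans ?_
    have := zeta_upper (show (1:ℝ) < 2 by norm_num)
    norm_num at this ⊢
    linarith
  have hQsq0 : 0 ≤ ∑' n : ℕ, (if n.Prime then ((n:ℝ)^(-σ))^2 else 0) := by
    apply tsum_nonneg
    intro n; by_cases hn : n.Prime <;> simp [hn]
    positivity
  -- P ≤ log l + 1 via the trivial character
  have hone := norm_eq_exp hσ1 (fun _ => 1) (fun n _ => by norm_num) (fun m n _ _ => by norm_num)
  have hg0eq : ∀ n : ℕ,
      (if n.Prime then -Real.log (‖1 - (fun _ : ℕ => (1:ℂ)) n * (((n:ℝ)^(-σ):ℝ):ℂ)‖) else 0)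
      = (if n.Prime then -Real.log (1 - (n:ℝ)^(-σ)) else 0) := by
    intro n
    by_cases hn : n.Prime
    · rw [if_pos hn, if_pos hn]
      congr 2
      rw [one_mul, show (1:ℂ) - (((n:ℝ)^(-σ):ℝ):ℂ) = (((1 - (n:ℝ)^(-σ) : ℝ)):ℂ) by push_cast; ring,
        Complex.norm_real, Real.norm_eq_abs, abs_of_nonneg (by linarith [hxhalf n hn])]
    · rw [if_neg hn, if_neg hn]
  have hZeval : ‖∑' n : ℕ, (if n = 0 then (0:ℂ)
      else (fun _ : ℕ => (1:ℂ)) n * (((n:ℝ) ^ (-σ) : ℝ) : ℂ))‖ = ∑' n : ℕ, (n:ℝ)^(-σ) := by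
    have e : ∀ n : ℕ, (if n = 0 then (0:ℂ) else (fun _ : ℕ => (1:ℂ)) n * (((n:ℝ) ^ (-σ) : ℝ) : ℂ))
        = (((n:ℝ) ^ (-σ) : ℝ) : ℂ) := by
      intro n
      rcases eq_or_ne n 0 with h0 | h0
      · rw [if_pos h0, h0]
        simp [Real.zero_rpow (show -σ ≠ 0 by intro hc; nlinarith)]
      · rw [if_neg h0, one_mul]
    rw [tsum_congr e, ← Complex.ofReal_tsum, Complex.norm_real, Real.norm_eq_abs,
      abs_of_nonneg (tsum_nonneg fun n => hxnn n)]
  have hSg0 : Summable (fun n : ℕ => if n.Prime then -Real.log (1 - (n:ℝ)^(-σ)) else 0) := by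
    apply Summable.of_nonneg_of_le _ _ (SxP.add (Ssq.mul_left 2))
    · intro n
      by_cases hn : n.Prime
      · rw [if_pos hn]
        have h1 : Real.log (1 - (n:ℝ)^(-σ)) ≤ 0 :=
          Real.log_nonpos (by linarith [hxhalf n hn]) (by linarith [hxnn n])
        linarith
      · simp [hn]
    · intro n
      by_cases hn : n.Prime
      · simp only [if_pos hn]
        exact neg_log_le_real (hxnn n) (hxhalf n hn)
      · simp [hn]
  have hg0lo : ∀ n : ℕ, (if n.Prime then (n:ℝ)^(-σ) else 0)
      ≤ (if n.Prime then -Real.log (1 - (n:ℝ)^(-σ)) else 0) := by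
    intro n
    by_cases hn : n.Prime
    · simp only [if_pos hn]
      have h1 : Real.log (1 - (n:ℝ)^(-σ)) ≤ (1 - (n:ℝ)^(-σ)) - 1 :=
        Real.log_le_sub_one_of_pos (by linarith [hxhalf n hn])
      linarith
    · simp [hn]
  have hg0sum : (∑' n : ℕ, (if n.Prime then -Real.log (1 - (n:ℝ)^(-σ)) else 0))
      = Real.log (∑' n : ℕ, (n:ℝ)^(-σ)) := by
    have h2 := hone.2
    rw [hZeval, tsum_congr hg0eq] at h2
    rw [h2, Real.log_exp]
  have hP_up : (∑' n : ℕ, (if n.Prime then (n:ℝ)^(-σ) else 0)) ≤ Real.log l + 1 := by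
    have hZpos : (0:ℝ) < ∑' n : ℕ, (n:ℝ)^(-σ) := lt_of_lt_of_le one_pos hZ1
    calc (∑' n : ℕ, (if n.Prime then (n:ℝ)^(-σ) else 0))
        ≤ ∑' n : ℕ, (if n.Prime then -Real.log (1 - (n:ℝ)^(-σ)) else 0) :=
          Summable.tsum_le_tsum hg0lo SxP hSg0
      _ = Real.log (∑' n : ℕ, (n:ℝ)^(-σ)) := hg0sum
      _ ≤ Real.log (1+l) := Real.log_le_log hZpos hZub
      _ ≤ Real.log (Real.exp 1 * l) :=
          Real.log_le_log (by linarith) (by nlinarith [Real.exp_one_gt_d9])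
      _ = Real.log l + 1 := by
          rw [Real.log_mul (Real.exp_ne_zero 1) (ne_of_gt hlpos), Real.log_exp]
          ring
  -- floor and finite sums
  have hN2 : 2 ≤ ⌊X⌋₊ := Nat.le_floor (by exact_mod_cast hX)
  have hNX : ((⌊X⌋₊:ℕ):ℝ) ≤ X := Nat.floor_le (by linarith)
  have hNpos : (0:ℝ) < ((⌊X⌋₊:ℕ):ℝ) := by
    have h0 : (0:ℕ) < ⌊X⌋₊ := by omega
    exact_mod_cast h0
  have hfin : ∀ v : ℕ → ℝ, ∑ n ∈ range (⌊X⌋₊+1), (if n.Prime then v n else 0)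
      = ∑ p ∈ Nat.primesBelow (⌊X⌋₊+1), v p := by
    intro v
    rw [Nat.primesBelow, Finset.sum_filter]
  have hsplitP := Summable.sum_add_tsum_nat_add
    (f := fun n : ℕ => if n.Prime then (n:ℝ)^(-σ) else 0) (⌊X⌋₊+1) SxP
  rw [hfin (fun n : ℕ => (n:ℝ)^(-σ))] at hsplitP
  have hPtail0 : ∑ p ∈ Nat.primesBelow (⌊X⌋₊+1), (p:ℝ)^(-σ)
      ≤ ∑' n : ℕ, (if n.Prime then (n:ℝ)^(-σ) else 0) := by
    rw [← hsplitP]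
    refine le_add_of_nonneg_right (tsum_nonneg fun i => ?_)
    by_cases hp : (i + (⌊X⌋₊+1)).Prime
    · simpa [hp] using hxnn (i + (⌊X⌋₊+1))
    · simp [hp]
  -- Mertens lower bound for the finite prime sum
  have hPfin_low : Real.log l - 5 ≤ ∑ p ∈ Nat.primesBelow (⌊X⌋₊+1), (p:ℝ)^(-σ) := by
    have hxlow : ∀ p ∈ Nat.primesBelow (⌊X⌋₊+1),
        1/(p:ℝ) - (σ-1) * (Real.log p / p) ≤ (p:ℝ)^(-σ) := by
      intro p hp
      have hpp := Nat.prime_of_mem_primesBelow hp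
      have hp2 : (2:ℝ) ≤ p := by exact_mod_cast hpp.two_le
      have hppos : (0:ℝ) < p := by linarith
      have e : (p:ℝ)^(-σ) = (p:ℝ)^(-(σ-1)) * (p:ℝ)⁻¹ := by
        rw [show ((p:ℝ)⁻¹) = (p:ℝ)^(-(1:ℝ)) from (Real.rpow_neg_one (p:ℝ)).symm,
          ← Real.rpow_add hppos]
        ring_nf
      have e3 : 1 - (σ-1)*Real.log p ≤ (p:ℝ)^(-(σ-1)) := by
        rw [Real.rpow_def_of_pos hppos]
        have h4 := Real.add_one_le_exp (Real.log p * (-(σ-1)))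
        have e5 : Real.log p * (-(σ-1)) + 1 = 1 - (σ-1)*Real.log p := by ring
        linarith
      calc 1/(p:ℝ) - (σ-1)*(Real.log p / p) = (1 - (σ-1)*Real.log p) * (p:ℝ)⁻¹ := by
            field_simp
          _ ≤ (p:ℝ)^(-(σ-1)) * (p:ℝ)⁻¹ := mul_le_mul_of_nonneg_right e3 (by positivity)
          _ = (p:ℝ)^(-σ) := e.symm
    have h1 := Finset.sum_le_sum hxlow
    rw [Finset.sum_sub_distrib, ← Finset.mul_sum] at h1
    have h2 := mertens2 hX
    rw [← hldef] at h2
    have h3 := mertens1 ⌊X⌋₊ hN2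
    have hlogN : Real.log (⌊X⌋₊:ℕ) ≤ l := by
      rw [hldef]
      exact Real.log_le_log hNpos hNX
    have hlog4 : Real.log 4 ≤ 1.4 := by
      rw [show (4:ℝ) = 2^(2:ℕ) by norm_num, Real.log_pow]
      push_cast
      nlinarith [Real.log_two_lt_d9]
    have hMnonneg : 0 ≤ ∑ p ∈ Nat.primesBelow (⌊X⌋₊+1), Real.log p / p := by
      apply Finset.sum_nonneg
      intro p hp
      have hpp := Nat.prime_of_mem_primesBelow hp
      have : (1:ℝ) ≤ p := by exact_mod_cast hpp.one_lt.le
      apply div_nonneg (Real.log_natCast_nonneg p) (by linarith)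
    have h4 : (σ-1) * ∑ p ∈ Nat.primesBelow (⌊X⌋₊+1), Real.log p / p ≤ (1/l) * (l + 1.4) := by
      rw [hσm]
      apply mul_le_mul_of_nonneg_left _ (by positivity)
      linarith
    have h5 : (1/l) * (l + 1.4) ≤ 3.1 := by
      rw [div_mul_eq_mul_div, div_le_iff₀ hlpos]
      nlinarith
    linarith
  -- D bounds
  have hsplitD := Summable.sum_add_tsum_nat_add
    (f := fun n : ℕ => if n.Prime then (1 - (h n).re) * (n:ℝ)^(-σ) else 0) (⌊X⌋₊+1) SdN
  rw [hfin (fun n : ℕ => (1 - (h n).re) * (n:ℝ)^(-σ))] at hsplitD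
  have hDfin : ∑ p ∈ Nat.primesBelow (⌊X⌋₊+1), (1 - (h p).re) * (p:ℝ)^(-σ) ≤ B := by
    have e : Nat.primesBelow (⌊X⌋₊+1) = (range (⌊X⌋₊+1)).filter Nat.Prime := rfl
    calc ∑ p ∈ Nat.primesBelow (⌊X⌋₊+1), (1 - (h p).re) * (p:ℝ)^(-σ)
        ≤ ∑ p ∈ Nat.primesBelow (⌊X⌋₊+1), (1 - (h p).re) / p := by
          apply Finset.sum_le_sum
          intro p hp
          have hpp := Nat.prime_of_mem_primesBelow hp
          have h2 := abs_le.mp (hre1 p hpp)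
          have h3 := hxinv p hpp
          calc (1 - (h p).re) * (p:ℝ)^(-σ) ≤ (1 - (h p).re) * (1/p) :=
                mul_le_mul_of_nonneg_left h3 (by linarith)
            _ = (1 - (h p).re)/p := by rw [mul_one_div]
      _ ≤ B := by rw [e]; exact hB
  have hDtail : ∑' i : ℕ,
      (fun n : ℕ => if n.Prime then (1 - (h n).re) * (n:ℝ)^(-σ) else 0) (i + (⌊X⌋₊+1))
      ≤ 2 * ((∑' n : ℕ, (if n.Prime then (n:ℝ)^(-σ) else 0))
            - ∑ p ∈ Nat.primesBelow (⌊X⌋₊+1), (p:ℝ)^(-σ)) := by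
    have htcalc : ∑' i : ℕ,
        (fun n : ℕ => if n.Prime then (1 - (h n).re) * (n:ℝ)^(-σ) else 0) (i + (⌊X⌋₊+1))
        ≤ ∑' i : ℕ, 2 * ((fun n : ℕ => if n.Prime then (n:ℝ)^(-σ) else 0) (i + (⌊X⌋₊+1))) := by
      apply Summable.tsum_le_tsum
      · intro i
        exact hd2 (i + (⌊X⌋₊+1))
      · exact (summable_nat_add_iff
            (f := fun n : ℕ => if n.Prime then (1 - (h n).re) * (n:ℝ)^(-σ) else 0)
            (⌊X⌋₊+1)).mpr SdN
      · exact ((summable_nat_add_iff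
            (f := fun n : ℕ => if n.Prime then (n:ℝ)^(-σ) else 0)
            (⌊X⌋₊+1)).mpr SxP).mul_left 2
    rw [tsum_mul_left] at htcalc
    have heq : ∑' i : ℕ, (fun n : ℕ => if n.Prime then (n:ℝ)^(-σ) else 0) (i + (⌊X⌋₊+1))
        = (∑' n : ℕ, (if n.Prime then (n:ℝ)^(-σ) else 0))
          - ∑ p ∈ Nat.primesBelow (⌊X⌋₊+1), (p:ℝ)^(-σ) := by
      linarith [hsplitP]
    rw [heq] at htcalc
    exact htcalc
  have hD_up : (∑' n : ℕ, (if n.Prime then (1 - (h n).re) * (n:ℝ)^(-σ) else 0)) ≤ B + 12 := by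
    have h1 : (∑' n : ℕ, (if n.Prime then (n:ℝ)^(-σ) else 0))
        - ∑ p ∈ Nat.primesBelow (⌊X⌋₊+1), (p:ℝ)^(-σ) ≤ 6 := by linarith
    linarith [hsplitD, hDfin, hDtail]
  -- combine
  have hAeq : (∑' n : ℕ, (if n.Prime then (h n).re * (n:ℝ)^(-σ) else 0))
      = (∑' n : ℕ, (if n.Prime then (n:ℝ)^(-σ) else 0))
        - (∑' n : ℕ, (if n.Prime then (1 - (h n).re) * (n:ℝ)^(-σ) else 0)) := by
    rw [haeq]
    exact Summable.tsum_sub SxP SdN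
  have hglo2 : (∑' n : ℕ, (if n.Prime then (h n).re * (n:ℝ)^(-σ) else 0))
      - (∑' n : ℕ, (if n.Prime then ((n:ℝ)^(-σ))^2 else 0))/2
      ≤ ∑' n : ℕ,
          (if n.Prime then -Real.log (‖1 - h n * (((n:ℝ)^(-σ):ℝ):ℂ)‖) else 0) := by
    have h1 := Summable.tsum_le_tsum hg_lo (SaN.sub (Ssq.div_const 2)) SgN
    rwa [Summable.tsum_sub SaN (Ssq.div_const 2), tsum_div_const] at h1
  have hgup2 : (∑' n : ℕ,
        (if n.Prime then -Real.log (‖1 - h n * (((n:ℝ)^(-σ):ℝ):ℂ)‖) else 0))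
      ≤ (∑' n : ℕ, (if n.Prime then (n:ℝ)^(-σ) else 0))
        + 2 * (∑' n : ℕ, (if n.Prime then ((n:ℝ)^(-σ))^2 else 0)) := by
    have h1 := Summable.tsum_le_tsum hg_up SgN (SxP.add (Ssq.mul_left 2))
    rwa [Summable.tsum_add SxP (Ssq.mul_left 2), tsum_mul_left] at h1
  have hmain := (norm_eq_exp hσ1 h hnorm hmul).1
  rw [hmain]
  have hgsum_lo : Real.log l - (B+20) ≤ ∑' n : ℕ,
      (if n.Prime then -Real.log (‖1 - h n * (((n:ℝ)^(-σ):ℝ):ℂ)‖) else 0) := by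
    linarith [hglo2, hAeq, hD_up, hPtail0, hPfin_low, hQsq, hQsq0]
  have hgsum_up : (∑' n : ℕ,
      (if n.Prime then -Real.log (‖1 - h n * (((n:ℝ)^(-σ):ℝ):ℂ)‖) else 0))
      ≤ Real.log l + 6 := by
    linarith [hgup2, hP_up, hQsq, hQsq0]
  constructor
  · have e1 : Real.exp (-(B+20)) * l = Real.exp (Real.log l - (B+20)) := by
      rw [Real.exp_sub, Real.exp_log hlpos, Real.exp_neg, div_eq_mul_inv]
      ring
    rw [e1]
    exact Real.exp_le_exp.mpr hgsum_lo
  · have e2 : Real.exp (Real.log l + 6) = Real.exp 6 * l := by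
      rw [Real.exp_add, Real.exp_log hlpos]
      ring
    rw [← e2]
    exact Real.exp_le_exp.mpr hgsum_up

end EPaux

/-- If the completely multiplicative `S¹`-valued function `h` satisfies
`∑_{p ≤ X} (1 - Re h(p))/p ≤ B`, then the Euler product
`𝔖 = ∏_p (1 - h(p)/p^{1+1/log X})⁻¹` satisfies
`c(B) log X ≤ |𝔖| ≤ C(B) log X`. -/
theorem euler_product_size (B : ℝ) :
    ∃ c C : ℝ, 0 < c ∧ 0 < C ∧
      ∀ (X : ℝ), 2 ≤ X → ∀ h : ℕ → ℂ,
        (∀ n, 0 < n → ‖h n‖ = 1) →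
        (∀ m n, 0 < m → 0 < n → h (m * n) = h m * h n) →
        (∑ p ∈ (Finset.range (⌊X⌋₊ + 1)).filter Nat.Prime,
            (1 - (h p).re) / p ≤ B) →
        c * Real.log X ≤
            ‖∏' p : Nat.Primes,
              (1 - h (p : ℕ) / ((p : ℕ) : ℂ) ^
                ((1 + 1 / Real.log X : ℝ) : ℂ))⁻¹‖ ∧
          ‖∏' p : Nat.Primes,
              (1 - h (p : ℕ) / ((p : ℕ) : ℂ) ^
                ((1 + 1 / Real.log X : ℝ) : ℂ))⁻¹‖ ≤ C * Real.log X := by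
  refine ⟨Real.exp (-(B+20)), Real.exp 6, Real.exp_pos _, Real.exp_pos _, ?_⟩
  intro X hX h hnorm hmul hB
  exact EPaux.main hX h hnorm hmul hB
end

section
/- Let q ≥ 2, k ≥ 1 and let χ̃ be a completely multiplicative function with |χ̃| = 1 that agrees with a Dirichlet character χ mod q on integers coprime to q. If a mod q^k is a good residue class (i.e., no p^k with p ∣ q divides a + m for any 1 ≤ m ≤ 2H), then for all n ≡ a (mod q^k) and all 1 ≤ m ≤ 2H: χ̃(n + m) = χ̃(gcd(a+m, q^k)) · χ((a+m)/gcd(a+m, q^k)), and in particular χ̃(n+m) depends only on a and m, not on n. -/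
/-- On good residue classes `a` mod `q^k`, the value `χ̃(n+m)` for
`n ≡ a (mod q^k)` and `1 ≤ m ≤ 2H` equals
`χ̃(gcd(a+m, q^k)) ⋅ χ((a+m)/gcd(a+m, q^k))`, and in particular depends only
on `a` and `m`, not on `n`. -/
theorem good_residue_value (q k H : ℕ) (hq : 2 ≤ q) (hk : 1 ≤ k) (hH : 1 ≤ H)
    (χ : DirichletCharacter ℂ q) (χt : ℕ → ℂ)
    (hnorm : ∀ n, 0 < n → ‖χt n‖ = 1)
    (hmul : ∀ m n, 0 < m → 0 < n → χt (m * n) = χt m * χt n)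
    (hagree : ∀ n : ℕ, Nat.Coprime n q → χt n = χ (n : ZMod q))
    (a : ℕ) (ha : 1 ≤ a)
    (hgood : ∀ p : ℕ, p.Prime → p ∣ q →
      ∀ m ∈ Finset.Icc 1 (2 * H), ¬ p ^ k ∣ a + m) :
    ∀ n : ℕ, 0 < n → n % q ^ k = a % q ^ k →
      ∀ m ∈ Finset.Icc 1 (2 * H),
        χt (n + m) = χt (Nat.gcd (a + m) (q ^ k)) *
          χ ((((a + m) / Nat.gcd (a + m) (q ^ k) : ℕ)) : ZMod q) := by
  intro n hn hmod m hm
  simp only [Finset.mem_Icc] at hm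
  set x := a + m with hx
  set y := n + m with hy
  set d := Nat.gcd x (q ^ k) with hd
  have hq0 : 0 < q := by omega
  have hqk0 : 0 < q ^ k := pow_pos hq0 k
  have hx0 : 0 < x := by omega
  have hy0 : 0 < y := by omega
  have hd0 : 0 < d := Nat.gcd_pos_of_pos_right _ hqk0
  have hdx : d ∣ x := Nat.gcd_dvd_left _ _
  have hdq : d ∣ q ^ k := Nat.gcd_dvd_right _ _
  -- congruence y ≡ x mod q^k
  have hcong : y ≡ x [MOD q ^ k] := by
    have : n ≡ a [MOD q ^ k] := hmod
    exact this.add_right m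
  -- d divides q^(k-1)
  have hdq1 : d ∣ q ^ (k - 1) := by
    rw [← Nat.factorization_le_iff_dvd hd0.ne' (pow_pos hq0 _).ne']
    intro p
    by_cases hp : p.Prime
    · by_cases hpq : p ∣ q
      · have hxk : ¬ p ^ k ∣ x := hgood p hp hpq m (Finset.mem_Icc.mpr hm)
        have h1 : d.factorization p ≤ x.factorization p :=
          (Nat.factorization_le_iff_dvd hd0.ne' hx0.ne').mpr hdx p
        have h2 : x.factorization p ≤ k - 1 := by
          by_contra hh
          exact hxk ((hp.pow_dvd_iff_le_factorization hx0.ne').mpr (by omega))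
        have h3 : 1 ≤ q.factorization p :=
          (hp.pow_dvd_iff_le_factorization (by omega)).mp (by simpa using hpq)
        have h4 : (q ^ (k-1)).factorization p = (k-1) * q.factorization p := by
          simp [Nat.factorization_pow]
        calc d.factorization p ≤ k - 1 := le_trans h1 h2
          _ ≤ (k-1) * q.factorization p := Nat.le_mul_of_pos_right _ h3
          _ = (q ^ (k-1)).factorization p := h4.symm
      · have h0 : (q ^ k).factorization p = 0 := by
          rw [Nat.factorization_pow]
          simp [Nat.factorization_eq_zero_of_not_dvd hpq]
        have h1 : d.factorization p ≤ (q ^ k).factorization p :=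
          (Nat.factorization_le_iff_dvd hd0.ne' hqk0.ne').mpr hdq p
        omega
    · simp [Nat.factorization_eq_zero_of_not_prime _ hp]
  have hdqk : d * q ∣ q ^ k := by
    have : d * q ∣ q ^ (k - 1) * q := mul_dvd_mul hdq1 dvd_rfl
    rwa [← pow_succ, Nat.sub_add_cancel hk] at this
  -- x/d coprime to q
  have hcop : Nat.Coprime (x / d) q := by
    by_contra hcc
    set g := Nat.gcd (x / d) q with hg
    have hg1 : 1 < g := by
      rcases Nat.lt_or_ge g 2 with h | h
      · interval_cases g
        · have := Nat.eq_zero_of_gcd_eq_zero_right hg.symm; omega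
        · exact absurd hg.symm hcc
      · omega
    obtain ⟨p, hp, hpg⟩ := Nat.exists_prime_and_dvd (by omega : g ≠ 1)
    have hpu : p ∣ x / d := hpg.trans (Nat.gcd_dvd_left _ _)
    have hpq : p ∣ q := hpg.trans (Nat.gcd_dvd_right _ _)
    have hpdx : d * p ∣ x := (Nat.dvd_div_iff_mul_dvd hdx).mp hpu
    have hpdq : d * p ∣ q ^ k := by
      have : d * p ∣ q ^ (k-1) * q := mul_dvd_mul hdq1 hpq
      rwa [← pow_succ, Nat.sub_add_cancel hk] at this
    have : d * p ∣ d := Nat.dvd_gcd hpdx hpdq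
    have := Nat.le_of_dvd hd0 this
    nlinarith [hp.two_le]
  -- gcd equality and properties for y
  have hgcd_eq : Nat.gcd y (q ^ k) = d := hcong.gcd_eq
  have hdy : d ∣ y := hgcd_eq ▸ Nat.gcd_dvd_left _ _
  -- y/d ≡ x/d mod q
  have hcongq : y / d ≡ x / d [MOD q] := by
    have h1 : y ≡ x [MOD d * q] := hcong.of_dvd hdqk
    have h2 : d * (y / d) ≡ d * (x / d) [MOD d * q] := by
      rwa [Nat.mul_div_cancel' hdy, Nat.mul_div_cancel' hdx]
    exact Nat.ModEq.mul_left_cancel' hd0.ne' h2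
  have hcopy : Nat.Coprime (y / d) q := by
    have := hcongq.gcd_eq
    unfold Nat.Coprime
    rw [this]
    exact hcop
  -- assemble
  have hyd0 : 0 < y / d := Nat.div_pos (Nat.le_of_dvd hy0 hdy) hd0
  have key : χt y = χt d * χt (y / d) := by
    conv_lhs => rw [← Nat.mul_div_cancel' hdy]
    exact hmul d (y / d) hd0 hyd0
  rw [key, hagree _ hcopy]
  congr 1
  congr 1
  exact (ZMod.natCast_eq_natCast_iff _ _ _).mpr hcongq
end
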